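/- arXiv:math/0404344 — 6 statements merged into one kernel-verified Lean document; each statement's English description precedes it below -/
import Mathlib

section
/- Let E and F be real Banach spaces, G and H Lie groups modelled on E and F, and f : G → H a group homomorphism. If f is C¹ as a map of manifolds (ContMDiff of order 1), then f is smooth (C^∞ as a map of manifolds). -/
set_option linter.unusedSectionVars false

open scoped Manifold Topology
open Filter ContinuousLinearMap

/-- Pure-analysis bootstrap: if `Φ` satisfies a local "homomorphism" equation with respect to
local multiplications `μ` (with local partial inverse `ν`) and `μH`, is differentiable near `a`,
and is `Cⁿ` at `a`, then it is `Cⁿ⁺¹` at `a`. -/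
theorem bootstrap_aux
    {E : Type*} [NormedAddCommGroup E] [NormedSpace ℝ E]
    {F : Type*} [NormedAddCommGroup F] [NormedSpace ℝ F]
    {μ ν : E × E → E} {μH : F × F → F} {Φ : E → F} {a : E} {b : F} (n : ℕ)
    (hμ : ∀ᶠ p in 𝓝 (a, a), ContDiffAt ℝ ((⊤ : ℕ∞) : WithTop ℕ∞) μ p)
    (hν : ∀ᶠ p in 𝓝 (a, a), ContDiffAt ℝ ((⊤ : ℕ∞) : WithTop ℕ∞) ν p)
    (hμH : ∀ᶠ q in 𝓝 (b, b), ContDiffAt ℝ ((⊤ : ℕ∞) : WithTop ℕ∞) μH q)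
    (hΦ1 : ∀ᶠ x in 𝓝 a, DifferentiableAt ℝ Φ x)
    (hΦn : ContDiffAt ℝ n Φ a)
    (hΦa : Φ a = b)
    (hcomm : ∀ᶠ p in 𝓝 (a, a), Φ (μ p) = μH (Φ p.1, Φ p.2))
    (hid : ∀ᶠ p in 𝓝 (a, a), μ (p.1, ν p) = p.2)
    (hνa : ∀ᶠ x in 𝓝 a, ν (x, x) = a)
    (hμa : ∀ᶠ x in 𝓝 a, μ (x, a) = x) :
    ContDiffAt ℝ (n + 1) Φ a := by
  subst hΦa
  have hcont : ContinuousAt Φ a := hΦn.continuousAt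
  have htop : ∀ m : ℕ, ((m : ℕ∞) : WithTop ℕ∞) ≤ ((⊤ : ℕ∞) : WithTop ℕ∞) := fun m => by
    exact_mod_cast le_top
  have hone : (1 : WithTop ℕ∞) ≤ ((⊤ : ℕ∞) : WithTop ℕ∞) := by exact_mod_cast le_top
  set L : E →L[ℝ] F := fderiv ℝ Φ a with hL
  set D2μ : E → (E →L[ℝ] E) := fun x => (fderiv ℝ μ (x, a)).comp (inr ℝ E E) with hD2μ
  set D2ν : E → (E →L[ℝ] E) := fun x => (fderiv ℝ ν (x, x)).comp (inr ℝ E E) with hD2ν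
  set D2μH : E → (F →L[ℝ] F) := fun x => (fderiv ℝ μH (Φ x, Φ a)).comp (inr ℝ F F) with hD2μH
  set Φ' : E → (E →L[ℝ] F) := fun x => ((D2μH x).comp L).comp (D2ν x) with hΦ'
  rw [contDiffAt_succ_iff_hasFDerivAt]
  refine ⟨Φ', ?_, ?_⟩
  · -- eventual HasFDerivAt
    -- extract open sets
    obtain ⟨T, hT, hTo, hTa⟩ := eventually_nhds_iff.1 hμ
    obtain ⟨Tν, hTν, hTνo, hTνa⟩ := eventually_nhds_iff.1 hν
    obtain ⟨TH, hTH, hTHo, hTHa⟩ := eventually_nhds_iff.1 hμH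
    obtain ⟨Tc, hTc, hTco, hTca⟩ := eventually_nhds_iff.1 hcomm
    obtain ⟨Ti, hTi, hTio, hTia⟩ := eventually_nhds_iff.1 hid
    have tdiag : Filter.Tendsto (fun x : E => (x, x)) (𝓝 a) (𝓝 (a, a)) :=
      (continuousAt_id.prodMk continuousAt_id)
    have tleft : Filter.Tendsto (fun x : E => (x, a)) (𝓝 a) (𝓝 (a, a)) :=
      (continuousAt_id.prodMk continuousAt_const)
    have tΦ : Filter.Tendsto (fun x : E => (Φ x, Φ a)) (𝓝 a) (𝓝 (Φ a, Φ a)) :=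
      hcont.prodMk continuousAt_const
    have key : ∀ᶠ x in 𝓝 a, HasFDerivAt Φ (Φ' x) x := by
      filter_upwards [tleft.eventually (hTo.eventually_mem hTa),
        tdiag.eventually (hTνo.eventually_mem hTνa),
        tΦ.eventually (hTHo.eventually_mem hTHa),
        tleft.eventually (hTco.eventually_mem hTca),
        tdiag.eventually (hTio.eventually_mem hTia),
        hΦ1, hνa, hμa] with x hx1 hx2 hx3 hx4 hx5 hx6 hx7 hx8
      -- derivative of y ↦ μ (x, y) at a
      have hμx : HasFDerivAt (fun y => μ (x, y)) (D2μ x) a :=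
        ((hT _ hx1).differentiableAt (by simp)).hasFDerivAt.comp a (hasFDerivAt_prodMk_right x a)
      -- derivative of y ↦ ν (x, y) at x
      have hνx : HasFDerivAt (fun y => ν (x, y)) (D2ν x) x :=
        ((hTν _ hx2).differentiableAt (by simp)).hasFDerivAt.comp x (hasFDerivAt_prodMk_right x x)
      -- derivative of the RHS y ↦ μH (Φ x, Φ y) at a
      have hz : HasFDerivAt (fun z => μH (Φ x, z)) ((fderiv ℝ μH (Φ x, Φ a)).comp (inr ℝ F F)) (Φ a) :=
        ((hTH _ hx3).differentiableAt (by simp)).hasFDerivAt.comp (Φ a) (hasFDerivAt_prodMk_right (Φ x) (Φ a))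
      have hΦdiffa : HasFDerivAt Φ L a := (hΦ1.self_of_nhds).hasFDerivAt
      have hR : HasFDerivAt (fun y => μH (Φ x, Φ y)) ((D2μH x).comp L) a :=
        hz.comp a hΦdiffa
      -- eventual equality LHS = RHS near a
      have hcongr : (fun y => Φ (μ (x, y))) =ᶠ[𝓝 a] fun y => μH (Φ x, Φ y) := by
        have hTc' : ∀ᶠ y in 𝓝 a, (x, y) ∈ Tc :=
          (Continuous.tendsto (continuous_const.prodMk continuous_id) a).eventually
            (hTco.eventually_mem hx4)
        filter_upwards [hTc'] with y hy using hTc _ hy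
      have hB : HasFDerivAt (fun y => Φ (μ (x, y))) ((D2μH x).comp L) a :=
        hR.congr_of_eventuallyEq hcongr
      -- chain rule on LHS
      have hC : HasFDerivAt (fun y => Φ (μ (x, y))) ((fderiv ℝ Φ x).comp (D2μ x)) a := by
        have hΦx : HasFDerivAt Φ (fderiv ℝ Φ x) ((fun y => μ (x, y)) a) := by
          rw [show (fun y => μ (x, y)) a = x from hx8]
          exact hx6.hasFDerivAt
        exact hΦx.comp a hμx
      have hD : (fderiv ℝ Φ x).comp (D2μ x) = (D2μH x).comp L := hC.unique hB
      -- the inverse identity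
      have hμν : HasFDerivAt (fun y => μ (x, ν (x, y))) ((D2μ x).comp (D2ν x)) x := by
        have hμx' : HasFDerivAt (fun y => μ (x, y)) (D2μ x) ((fun y => ν (x, y)) x) := by
          rw [show (fun y => ν (x, y)) x = a from hx7]
          exact hμx
        exact hμx'.comp x hνx
      have hidx : (fun y => μ (x, ν (x, y))) =ᶠ[𝓝 x] fun y => y := by
        have hTi' : ∀ᶠ y in 𝓝 x, (x, y) ∈ Ti :=
          (Continuous.tendsto (continuous_const.prodMk continuous_id) x).eventually
            (hTio.eventually_mem hx5)
        filter_upwards [hTi'] with y hy using hTi _ hy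
      have hE : HasFDerivAt (fun y : E => y) ((D2μ x).comp (D2ν x)) x :=
        hμν.congr_of_eventuallyEq hidx.symm
      have hF : (D2μ x).comp (D2ν x) = ContinuousLinearMap.id ℝ E :=
        hE.unique (hasFDerivAt_id x)
      have : Φ' x = fderiv ℝ Φ x := by
        show ((D2μH x).comp L).comp (D2ν x) = fderiv ℝ Φ x
        rw [← hD]
        simp only [ContinuousLinearMap.comp_assoc, hF, ContinuousLinearMap.comp_id]
      rw [this]
      exact hx6.hasFDerivAt
    exact key.exists_mem
  · -- Φ' is Cⁿ at a
    have h1 : ContDiffAt ℝ n (fun x => fderiv ℝ μH (Φ x, Φ a)) a := by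
      have hμHb : ContDiffAt ℝ n (fderiv ℝ μH) (Φ a, Φ a) :=
        hμH.self_of_nhds.fderiv_right (by exact_mod_cast le_top)
      exact hμHb.comp (f := fun x : E => (Φ x, Φ a)) a (hΦn.prodMk contDiffAt_const)
    have h2 : ContDiffAt ℝ n (fun x => fderiv ℝ ν (x, x)) a := by
      have hνa' : ContDiffAt ℝ n (fderiv ℝ ν) (a, a) :=
        hν.self_of_nhds.fderiv_right (by exact_mod_cast le_top)
      exact hνa'.comp (f := fun x : E => (x, x)) a (contDiffAt_id.prodMk contDiffAt_id)
    have hA : ContDiffAt ℝ n D2μH a := h1.clm_comp contDiffAt_const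
    have hBν : ContDiffAt ℝ n D2ν a := h2.clm_comp contDiffAt_const
    exact ((hA.clm_comp contDiffAt_const).clm_comp hBν)

section LieStuff

variable {E : Type*} [NormedAddCommGroup E] [NormedSpace ℝ E]
    {G : Type*} [TopologicalSpace G] [ChartedSpace E G] [Group G] [LieGroup 𝓘(ℝ, E) (⊤ : ℕ∞) G]

/-- A smooth binary operation on a Lie group, read in the chart at `1`, is smooth near
`(a, a)` where `a` is the image of `1` in the chart. -/
theorem aux_mu_smooth (χ : G → G → G)
    (hχ : ContMDiff (𝓘(ℝ, E).prod 𝓘(ℝ, E)) 𝓘(ℝ, E) (⊤ : ℕ∞) (fun p : G × G => χ p.1 p.2))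
    (hχ1 : χ 1 1 = 1) :
    ∀ᶠ p in 𝓝 (extChartAt 𝓘(ℝ, E) (1 : G) 1, extChartAt 𝓘(ℝ, E) (1 : G) 1),
      ContDiffAt ℝ ((⊤ : ℕ∞) : WithTop ℕ∞)
        (fun q : E × E => extChartAt 𝓘(ℝ, E) (1 : G)
          (χ ((extChartAt 𝓘(ℝ, E) (1 : G)).symm q.1) ((extChartAt 𝓘(ℝ, E) (1 : G)).symm q.2))) p := by
  set φ := extChartAt 𝓘(ℝ, E) (1 : G) with hφ
  set a := φ 1 with ha
  have hφc : ContinuousAt φ.symm a := continuousAt_extChartAt_symm (1 : G)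
  have htarget : φ.target ∈ 𝓝 a := extChartAt_target_mem_nhds (1 : G)
  have hsource : φ.source ∈ 𝓝 (1 : G) := extChartAt_source_mem_nhds (1 : G)
  have hinv : φ.symm a = 1 := extChartAt_to_inv (1 : G)
  -- eventual membership conditions
  have h1 : ∀ᶠ p : E × E in 𝓝 (a, a), p.1 ∈ φ.target := continuousAt_fst.eventually_mem htarget
  have h2 : ∀ᶠ p : E × E in 𝓝 (a, a), p.2 ∈ φ.target := continuousAt_snd.eventually_mem htarget
  have hc1 : ContinuousAt (fun p : E × E => φ.symm p.1) (a, a) := ContinuousAt.comp (x := ((a, a) : E × E)) hφc continuousAt_fst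
  have hc2 : ContinuousAt (fun p : E × E => φ.symm p.2) (a, a) := ContinuousAt.comp (x := ((a, a) : E × E)) hφc continuousAt_snd
  have h3 : ∀ᶠ p : E × E in 𝓝 (a, a), χ (φ.symm p.1) (φ.symm p.2) ∈ φ.source := by
    have hcχ : ContinuousAt (fun p : E × E => χ (φ.symm p.1) (φ.symm p.2)) (a, a) :=
      (hχ.continuous.continuousAt).comp (hc1.prodMk hc2)
    refine hcχ.eventually_mem ?_
    simpa [hinv, hχ1] using hsource
  filter_upwards [h1, h2, h3] with p hp1 hp2 hp3
  -- now prove smoothness at `p`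
  rw [← contMDiffAt_iff_contDiffAt]
  have hfst : ContMDiffAt 𝓘(ℝ, E × E) 𝓘(ℝ, E) (⊤ : ℕ∞) (Prod.fst : E × E → E) p :=
    contMDiffAt_iff_contDiffAt.2 contDiffAt_fst
  have hsnd : ContMDiffAt 𝓘(ℝ, E × E) 𝓘(ℝ, E) (⊤ : ℕ∞) (Prod.snd : E × E → E) p :=
    contMDiffAt_iff_contDiffAt.2 contDiffAt_snd
  have hsymm1 : ContMDiffAt 𝓘(ℝ, E × E) 𝓘(ℝ, E) (⊤ : ℕ∞) (fun q : E × E => φ.symm q.1) p :=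
    ((contMDiffOn_extChartAt_symm (1 : G)).contMDiffAt
      ((isOpen_extChartAt_target (1 : G)).mem_nhds hp1)).comp p hfst
  have hsymm2 : ContMDiffAt 𝓘(ℝ, E × E) 𝓘(ℝ, E) (⊤ : ℕ∞) (fun q : E × E => φ.symm q.2) p :=
    ((contMDiffOn_extChartAt_symm (1 : G)).contMDiffAt
      ((isOpen_extChartAt_target (1 : G)).mem_nhds hp2)).comp p hsnd
  have hmid : ContMDiffAt 𝓘(ℝ, E × E) 𝓘(ℝ, E) (⊤ : ℕ∞)
      (fun q : E × E => χ (φ.symm q.1) (φ.symm q.2)) p :=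
    (hχ.contMDiffAt).comp p (hsymm1.prodMk hsymm2)
  have houter : ContMDiffAt 𝓘(ℝ, E) 𝓘(ℝ, E) (⊤ : ℕ∞) φ (χ (φ.symm p.1) (φ.symm p.2)) :=
    contMDiffAt_extChartAt' (by rwa [← extChartAt_source 𝓘(ℝ, E)])
  exact houter.comp p hmid

end LieStuff

section Main

variable {E : Type*} [NormedAddCommGroup E] [NormedSpace ℝ E] [CompleteSpace E]
    {F : Type*} [NormedAddCommGroup F] [NormedSpace ℝ F] [CompleteSpace F]
    {G : Type*} [TopologicalSpace G] [ChartedSpace E G] [Group G] [LieGroup 𝓘(ℝ, E) (⊤ : ℕ∞) G]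
    {H : Type*} [TopologicalSpace H] [ChartedSpace F H] [Group H] [LieGroup 𝓘(ℝ, F) (⊤ : ℕ∞) H]

/-- A homomorphism which is `C^k` at `1` is `C^k` everywhere. -/
theorem hom_contMDiff_of_at_one (f : G →* H) {k : ℕ∞}
    (h1 : ContMDiffAt 𝓘(ℝ, E) 𝓘(ℝ, F) k f (1 : G)) :
    ContMDiff 𝓘(ℝ, E) 𝓘(ℝ, F) k f := by
  intro g
  have hfun : (f : G → H) = (fun h => f g * h) ∘ (f : G → H) ∘ (fun x => g⁻¹ * x) := by
    funext x
    simp only [Function.comp_apply, map_mul, map_inv, ← mul_assoc, mul_inv_cancel, one_mul]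
  have h2 : ContMDiffAt 𝓘(ℝ, E) 𝓘(ℝ, E) k (fun x : G => g⁻¹ * x) g :=
    contMDiff_mul_left.contMDiffAt
  have h3 : ContMDiffAt 𝓘(ℝ, E) 𝓘(ℝ, F) k f ((fun x : G => g⁻¹ * x) g) := by
    simpa [inv_mul_cancel] using h1
  have h5 : ContMDiffAt 𝓘(ℝ, F) 𝓘(ℝ, F) k (fun h => f g * h)
      (((f : G → H) ∘ fun x : G => g⁻¹ * x) g) := contMDiff_mul_left.contMDiffAt
  have := h5.comp g (h3.comp g h2)
  rw [hfun]
  exact this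

/-- Bootstrap: a `C¹` homomorphism which is `Cⁿ` at `1` is `Cⁿ⁺¹` at `1`. -/
theorem hom_step (f : G →* H) (hf : ContMDiff 𝓘(ℝ, E) 𝓘(ℝ, F) 1 f) (n : ℕ)
    (ihn : ContMDiffAt 𝓘(ℝ, E) 𝓘(ℝ, F) n f (1 : G)) :
    ContMDiffAt 𝓘(ℝ, E) 𝓘(ℝ, F) (n + 1 : ℕ) f (1 : G) := by
  set φ := extChartAt 𝓘(ℝ, E) (1 : G) with hφdef
  set ψ := extChartAt 𝓘(ℝ, F) (1 : H) with hψdef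
  set a := φ 1 with ha
  set b := ψ 1 with hb
  set Φ : E → F := fun x => ψ (f (φ.symm x)) with hΦdef
  set μ : E × E → E := fun p => φ (φ.symm p.1 * φ.symm p.2) with hμdef
  set ν : E × E → E := fun p => φ ((φ.symm p.1)⁻¹ * φ.symm p.2) with hνdef
  set μH : F × F → F := fun q => ψ (ψ.symm q.1 * ψ.symm q.2) with hμHdef
  have hφc : ContinuousAt φ.symm a := continuousAt_extChartAt_symm (1 : G)
  have htarget : φ.target ∈ 𝓝 a := extChartAt_target_mem_nhds (1 : G)
  have hsourceG : φ.source ∈ 𝓝 (1 : G) := extChartAt_source_mem_nhds (1 : G)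
  have hsourceH : ψ.source ∈ 𝓝 (1 : H) := extChartAt_source_mem_nhds (1 : H)
  have hinv : φ.symm a = 1 := extChartAt_to_inv (1 : G)
  have hinvH : ψ.symm b = 1 := extChartAt_to_inv (1 : H)
  have hfc : Continuous f := hf.continuous
  haveI : ContinuousMul G := continuousMul_of_contMDiffMul 𝓘(ℝ, E) (⊤ : ℕ∞)
  haveI : IsTopologicalGroup G :=
    { continuous_inv := (contMDiff_inv 𝓘(ℝ, E) (⊤ : ℕ∞)).continuous }
  -- smoothness of local multiplications
  have hμ : ∀ᶠ p in 𝓝 (a, a), ContDiffAt ℝ ((⊤ : ℕ∞) : WithTop ℕ∞) μ p :=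
    aux_mu_smooth (fun u v : G => u * v) (contMDiff_mul 𝓘(ℝ, E) (⊤ : ℕ∞)) (one_mul 1)
  have hν : ∀ᶠ p in 𝓝 (a, a), ContDiffAt ℝ ((⊤ : ℕ∞) : WithTop ℕ∞) ν p :=
    aux_mu_smooth (fun u v : G => u⁻¹ * v)
      ((contMDiff_fst.inv).mul contMDiff_snd) (by simp)
  have hμH : ∀ᶠ q in 𝓝 (b, b), ContDiffAt ℝ ((⊤ : ℕ∞) : WithTop ℕ∞) μH q :=
    aux_mu_smooth (fun u v : H => u * v) (contMDiff_mul 𝓘(ℝ, F) (⊤ : ℕ∞)) (one_mul 1)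
  -- eventual membership facts
  have hsymm1 : ContinuousAt (fun p : E × E => φ.symm p.1) (a, a) :=
    ContinuousAt.comp (x := ((a, a) : E × E)) hφc continuousAt_fst
  have hsymm2 : ContinuousAt (fun p : E × E => φ.symm p.2) (a, a) :=
    ContinuousAt.comp (x := ((a, a) : E × E)) hφc continuousAt_snd
  have e2 : ∀ᶠ p : E × E in 𝓝 (a, a), p.2 ∈ φ.target := continuousAt_snd.eventually_mem htarget
  have e3 : ∀ᶠ p : E × E in 𝓝 (a, a), φ.symm p.1 * φ.symm p.2 ∈ φ.source :=
    (hsymm1.mul hsymm2).eventually_mem (by simpa [hinv] using hsourceG)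
  have e4 : ∀ᶠ p : E × E in 𝓝 (a, a), f (φ.symm p.1) ∈ ψ.source :=
    (hfc.continuousAt.comp hsymm1).eventually_mem (by simpa [hinv, map_one] using hsourceH)
  have e5 : ∀ᶠ p : E × E in 𝓝 (a, a), f (φ.symm p.2) ∈ ψ.source :=
    (hfc.continuousAt.comp hsymm2).eventually_mem (by simpa [hinv, map_one] using hsourceH)
  have e6 : ∀ᶠ p : E × E in 𝓝 (a, a), (φ.symm p.1)⁻¹ * φ.symm p.2 ∈ φ.source :=
    ((hsymm1.inv).mul hsymm2).eventually_mem (by simpa [hinv] using hsourceG)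
  -- functional equations
  have hcomm : ∀ᶠ p in 𝓝 (a, a), Φ (μ p) = μH (Φ p.1, Φ p.2) := by
    filter_upwards [e3, e4, e5] with p h3 h4 h5
    simp only [hΦdef, hμdef, hμHdef]
    rw [φ.left_inv h3, ψ.left_inv h4, ψ.left_inv h5, ← map_mul]
  have hid : ∀ᶠ p in 𝓝 (a, a), μ (p.1, ν p) = p.2 := by
    filter_upwards [e2, e6] with p h2 h6
    simp only [hμdef, hνdef]
    rw [φ.left_inv h6, mul_inv_cancel_left, φ.right_inv h2]
  have hνa : ∀ᶠ x in 𝓝 a, ν (x, x) = a := by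
    filter_upwards [htarget] with x hx
    simp only [hνdef]
    rw [inv_mul_cancel, ← ha]
  have hμa : ∀ᶠ x in 𝓝 a, μ (x, a) = x := by
    filter_upwards [htarget] with x hx
    simp only [hμdef]
    rw [hinv, mul_one, φ.right_inv hx]
  have hΦa : Φ a = b := by
    simp only [hΦdef]
    rw [hinv, map_one]
  -- regularity of Φ
  have hΦn : ContDiffAt ℝ n Φ a := by
    have h := (contMDiffAt_iff.1 ihn).2
    rw [map_one] at h
    simpa [Function.comp_def, contDiffWithinAt_univ, hΦdef, ha, hφdef, hψdef] using h
  have hΦ1 : ∀ᶠ x in 𝓝 a, DifferentiableAt ℝ Φ x := by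
    have h := (contMDiffAt_iff.1 (hf (1 : G))).2
    rw [map_one] at h
    have h' : ContDiffAt ℝ 1 Φ a := by
      simpa [Function.comp_def, contDiffWithinAt_univ, hΦdef, ha, hφdef, hψdef] using h
    have h'' : ContDiffAt ℝ ((0 : ℕ) + 1) Φ a := by exact_mod_cast h'
    obtain ⟨f₀, ⟨u, hu, hfu⟩, -⟩ := contDiffAt_succ_iff_hasFDerivAt.1 h''
    exact Filter.eventually_of_mem hu fun x hx => (hfu x hx).differentiableAt
  -- bootstrap
  have hboot : ContDiffAt ℝ (n + 1) Φ a :=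
    bootstrap_aux n hμ hν hμH hΦ1 hΦn hΦa hcomm hid hνa hμa
  rw [contMDiffAt_iff]
  refine ⟨hfc.continuousAt, ?_⟩
  rw [map_one]
  simp only [Function.comp_def, contDiffWithinAt_univ, modelWithCornersSelf_coe, Set.range_id]
  exact_mod_cast hboot

end Main

/-- A `C¹` group homomorphism between Banach Lie groups is smooth. -/
theorem c1_homomorphism_is_smooth
    {E : Type*} [NormedAddCommGroup E] [NormedSpace ℝ E] [CompleteSpace E]
    {F : Type*} [NormedAddCommGroup F] [NormedSpace ℝ F] [CompleteSpace F]
    {G : Type*} [TopologicalSpace G] [ChartedSpace E G] [Group G] [LieGroup 𝓘(ℝ, E) (⊤ : ℕ∞) G]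
    {H : Type*} [TopologicalSpace H] [ChartedSpace F H] [Group H] [LieGroup 𝓘(ℝ, F) (⊤ : ℕ∞) H]
    (f : G →* H)
    (hf : ContMDiff 𝓘(ℝ, E) 𝓘(ℝ, F) 1 f) :
    ContMDiff 𝓘(ℝ, E) 𝓘(ℝ, F) (⊤ : ℕ∞) f := by
  rw [contMDiff_infty]
  intro n
  induction n with
  | zero => exact hf.of_le (by exact_mod_cast Nat.zero_le 1)
  | succ m ih =>
    exact hom_contMDiff_of_at_one f (hom_step f hf m (ih (1 : G)))
end

section
/- Let E be a finite-dimensional real normed space, U ⊆ E open, F a real normed space, α ∈ (0,1], and f : U → F a map. If for every continuous linear functional ℓ : F → ℝ the composite ℓ ∘ f : U → ℝ is locally Hölder of exponent α, then f itself is locally Hölder of exponent α. -/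
open scoped Topology

/-- Auxiliary: a locally Hölder real-valued map on a compact set is (globally) Hölder there. -/
lemma aux_holder_global {α : ℝ} (hα : α ∈ Set.Ioc (0 : ℝ) 1)
    {E : Type*} [NormedAddCommGroup E] {g : E → ℝ} {B : Set E} (hB : IsCompact B)
    (h : ∀ p ∈ B, ∃ ε > (0 : ℝ), ∃ C ≥ (0 : ℝ), ∀ y ∈ Metric.ball p ε, ∀ z ∈ Metric.ball p ε,
      ‖g z - g y‖ ≤ C * ‖z - y‖ ^ α) :
    ∃ C ≥ (0 : ℝ), ∀ y ∈ B, ∀ z ∈ B, ‖g z - g y‖ ≤ C * ‖z - y‖ ^ α := by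
  rcases B.eq_empty_or_nonempty with rfl | ⟨x₀, hx₀⟩
  · exact ⟨0, le_rfl, by simp⟩
  choose! ε hε C₀ hC₀ hb using h
  -- continuity of g on B
  have hrpow0 : Filter.Tendsto (fun t : ℝ => t ^ α) (𝓝 0) (𝓝 0) := by
    have := Real.continuousAt_rpow_const 0 α (Or.inr hα.1.le)
    simpa [ContinuousAt, Real.zero_rpow hα.1.ne'] using this
  have hcont : ContinuousOn g B := by
    intro p hp
    have hball : Metric.ball p (ε p) ∈ 𝓝[B] p :=
      nhdsWithin_le_nhds (Metric.ball_mem_nhds p (hε p hp))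
    have hle : ∀ᶠ z in 𝓝[B] p, ‖g z - g p‖ ≤ C₀ p * ‖z - p‖ ^ α := by
      filter_upwards [hball] with z hz
      exact hb p hp p (Metric.mem_ball_self (hε p hp)) z hz
    have htendsto : Filter.Tendsto (fun z => C₀ p * ‖z - p‖ ^ α) (𝓝[B] p) (𝓝 0) := by
      have h1 : Filter.Tendsto (fun z : E => ‖z - p‖) (𝓝[B] p) (𝓝 0) := by
        have : Filter.Tendsto (fun z : E => ‖z - p‖) (𝓝 p) (𝓝 ‖p - p‖) :=
          ((continuous_id.sub continuous_const).norm.tendsto p)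
        rw [sub_self, norm_zero] at this
        exact this.mono_left nhdsWithin_le_nhds
      simpa using (hrpow0.comp h1).const_mul (C₀ p)
    have := squeeze_zero_norm' hle htendsto
    have : Filter.Tendsto g (𝓝[B] p) (𝓝 (g p)) := by
      have h2 := this.add (tendsto_const_nhds (x := g p))
      simpa using h2
    exact this
  obtain ⟨M₀, hM₀⟩ := hB.exists_bound_of_continuousOn hcont
  set M : ℝ := max M₀ 0 with hM
  have hMnn : 0 ≤ M := le_max_right _ _
  have hMb : ∀ q ∈ B, ‖g q‖ ≤ M := fun q hq => le_trans (hM₀ q hq) (le_max_left _ _)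
  -- finite subcover by half-radius balls
  obtain ⟨t, htB, hcover⟩ := hB.elim_nhds_subcover (fun p => Metric.ball p (ε p / 2))
    (fun p hp => Metric.ball_mem_nhds p (by linarith [hε p hp]))
  have htne : t.Nonempty := by
    rcases Set.mem_iUnion₂.1 (hcover hx₀) with ⟨p, hp, _⟩
    exact ⟨p, hp⟩
  set δ : ℝ := t.inf' htne (fun p => ε p / 2) with hδdef
  have hδpos : 0 < δ := by
    rw [hδdef, Finset.lt_inf'_iff]
    intro p hp
    linarith [hε p (htB p hp)]
  have hδα : 0 < δ ^ α := Real.rpow_pos_of_pos hδpos α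
  refine ⟨max (2 * M / δ ^ α) (t.sup' htne C₀), le_trans (by positivity) (le_max_left _ _),
    fun y hy z hz => ?_⟩
  have hzyα : 0 ≤ ‖z - y‖ ^ α := Real.rpow_nonneg (norm_nonneg _) α
  rcases lt_or_ge ‖z - y‖ δ with hlt | hge
  · -- close together: common ball
    rcases Set.mem_iUnion₂.1 (hcover hy) with ⟨p, hp, hyp⟩
    have hpB := htB p hp
    have hδle : δ ≤ ε p / 2 := Finset.inf'_le _ hp
    have hyball : y ∈ Metric.ball p (ε p) := by
      have := Metric.mem_ball.1 hyp
      exact Metric.mem_ball.2 (by linarith [hε p hpB])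
    have hzball : z ∈ Metric.ball p (ε p) := by
      have h1 : dist y p < ε p / 2 := Metric.mem_ball.1 hyp
      have h2 : dist z y < δ := by rwa [dist_eq_norm]
      have := dist_triangle z y p
      exact Metric.mem_ball.2 (by linarith)
    calc ‖g z - g y‖ ≤ C₀ p * ‖z - y‖ ^ α := hb p hpB y hyball z hzball
      _ ≤ max (2 * M / δ ^ α) (t.sup' htne C₀) * ‖z - y‖ ^ α := by
          apply mul_le_mul_of_nonneg_right _ hzyα
          exact le_trans (Finset.le_sup' C₀ hp) (le_max_right _ _)
  · -- far apart: use boundedness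
    have hδzy : δ ^ α ≤ ‖z - y‖ ^ α := Real.rpow_le_rpow hδpos.le hge hα.1.le
    have h1 : ‖g z - g y‖ ≤ 2 * M := by
      calc ‖g z - g y‖ ≤ ‖g z‖ + ‖g y‖ := norm_sub_le _ _
        _ ≤ M + M := add_le_add (hMb z hz) (hMb y hy)
        _ = 2 * M := by ring
    calc ‖g z - g y‖ ≤ 2 * M := h1
      _ = (2 * M / δ ^ α) * δ ^ α := by field_simp
      _ ≤ (2 * M / δ ^ α) * ‖z - y‖ ^ α := by
          apply mul_le_mul_of_nonneg_left hδzy (by positivity)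
      _ ≤ max (2 * M / δ ^ α) (t.sup' htne C₀) * ‖z - y‖ ^ α :=
          mul_le_mul_of_nonneg_right (le_max_left _ _) hzyα

/-- If `E` is finite-dimensional, `U ⊆ E` is open and `ℓ ∘ f` is locally `α`-Hölder on `U`
for every continuous linear functional `ℓ` on `F`, then `f : U → F` is locally
`α`-Hölder on `U`. -/
theorem locally_holder_of_forall_functional_locally_holder
    {E : Type*} [NormedAddCommGroup E] [NormedSpace ℝ E] [FiniteDimensional ℝ E]
    {F : Type*} [NormedAddCommGroup F] [NormedSpace ℝ F]
    {α : ℝ} (hα : α ∈ Set.Ioc (0 : ℝ) 1)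
    {U : Set E} (hU : IsOpen U) (f : E → F)
    (hf : ∀ ℓ : F →L[ℝ] ℝ, ∀ x ∈ U, ∃ V ∈ 𝓝[U] x, V ⊆ U ∧ ∃ C ≥ (0 : ℝ),
      ∀ y ∈ V, ∀ z ∈ V, ‖ℓ (f z) - ℓ (f y)‖ ≤ C * ‖z - y‖ ^ α) :
    ∀ x ∈ U, ∃ V ∈ 𝓝[U] x, V ⊆ U ∧ ∃ C ≥ (0 : ℝ),
      ∀ y ∈ V, ∀ z ∈ V, ‖f z - f y‖ ≤ C * ‖z - y‖ ^ α := by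
  intro x hx
  obtain ⟨r, hr, hrU⟩ := (Metric.nhds_basis_closedBall.mem_iff).1 (hU.mem_nhds hx)
  set B : Set E := Metric.closedBall x r with hBdef
  have hBc : IsCompact B := isCompact_closedBall x r
  -- Step 1: each ℓ ∘ f is Hölder on B with constant C ℓ
  have step1 : ∀ ℓ : F →L[ℝ] ℝ, ∃ C ≥ (0 : ℝ), ∀ y ∈ B, ∀ z ∈ B,
      ‖ℓ (f z) - ℓ (f y)‖ ≤ C * ‖z - y‖ ^ α := by
    intro ℓ
    apply aux_holder_global hα hBc
    intro p hp
    have hpU : p ∈ U := hrU hp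
    obtain ⟨V, hV, -, C, hC, hb⟩ := hf ℓ p hpU
    rw [nhdsWithin_eq_nhds.2 (hU.mem_nhds hpU)] at hV
    obtain ⟨ε, hε, hεV⟩ := Metric.mem_nhds_iff.1 hV
    exact ⟨ε, hε, C, hC, fun y hy z hz => hb y (hεV hy) z (hεV hz)⟩
  choose C hC hbound using step1
  -- Step 2: Banach–Steinhaus on the difference quotients in the double dual
  set ι : Type _ := ↥B × ↥B with hι
  set g : ι → StrongDual ℝ F →L[ℝ] ℝ := fun p =>
    NormedSpace.inclusionInDoubleDual ℝ F
      ((‖(p.2 : E) - (p.1 : E)‖ ^ α)⁻¹ • (f p.2 - f p.1)) with hg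
  have hpt : ∀ ℓ : StrongDual ℝ F, ∃ M, ∀ p : ι, ‖g p ℓ‖ ≤ M := by
    intro ℓ
    refine ⟨C ℓ, fun p => ?_⟩
    rcases p with ⟨⟨y, hy⟩, ⟨z, hz⟩⟩
    have : g (⟨y, hy⟩, ⟨z, hz⟩) ℓ = (‖z - y‖ ^ α)⁻¹ * (ℓ (f z) - ℓ (f y)) := by
      simp [hg, NormedSpace.dual_def, map_sub, smul_eq_mul]
    rw [this]
    rcases eq_or_ne z y with rfl | hne
    · simpa using hC ℓ
    · have hpos : 0 < ‖z - y‖ ^ α :=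
        Real.rpow_pos_of_pos (norm_pos_iff.2 (sub_ne_zero.2 hne)) α
      rw [norm_mul, Real.norm_eq_abs, abs_inv, abs_of_pos hpos]
      calc (‖z - y‖ ^ α)⁻¹ * ‖ℓ (f z) - ℓ (f y)‖
          ≤ (‖z - y‖ ^ α)⁻¹ * (C ℓ * ‖z - y‖ ^ α) := by
            apply mul_le_mul_of_nonneg_left _ (inv_nonneg.2 hpos.le)
            exact hbound ℓ y hy z hz
        _ = C ℓ := by field_simp
  obtain ⟨C', hC'⟩ := banach_steinhaus hpt
  refine ⟨B, nhdsWithin_le_nhds (Metric.closedBall_mem_nhds x hr), hrU,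
    max C' 0, le_max_right _ _, fun y hy z hz => ?_⟩
  rcases eq_or_ne z y with rfl | hne
  · simp [Real.zero_rpow hα.1.ne']
  have hpos : 0 < ‖z - y‖ ^ α :=
    Real.rpow_pos_of_pos (norm_pos_iff.2 (sub_ne_zero.2 hne)) α
  set v : F := (‖z - y‖ ^ α)⁻¹ • (f z - f y) with hv
  have hvle : ‖v‖ ≤ max C' 0 := by
    apply NormedSpace.norm_le_dual_bound ℝ v (le_max_right _ _)
    intro ℓ
    have h1 : ℓ v = g (⟨y, hy⟩, ⟨z, hz⟩) ℓ := by simp [hg, hv, NormedSpace.dual_def]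
    rw [h1]
    calc ‖g (⟨y, hy⟩, ⟨z, hz⟩) ℓ‖ ≤ ‖g (⟨y, hy⟩, ⟨z, hz⟩)‖ * ‖ℓ‖ :=
          (g (⟨y, hy⟩, ⟨z, hz⟩)).le_opNorm ℓ
      _ ≤ C' * ‖ℓ‖ := mul_le_mul_of_nonneg_right (hC' _) (norm_nonneg _)
      _ ≤ max C' 0 * ‖ℓ‖ := mul_le_mul_of_nonneg_right (le_max_left _ _) (norm_nonneg _)
  have hnv : ‖f z - f y‖ = ‖z - y‖ ^ α * ‖v‖ := by
    rw [hv, norm_smul, Real.norm_eq_abs, abs_inv, abs_of_pos hpos]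
    field_simp
  rw [hnv, mul_comm]
  exact mul_le_mul_of_nonneg_right hvle hpos.le
end

section
/- Let E and F be real Banach spaces, G and H Lie groups modelled on E and F, α ∈ (0, 1/2], and f : G → H a group homomorphism which is α-Hölder on a chart neighbourhood of the identity (with charts φ of G at 1 and ψ of H at 1, neighbourhood W and constant C). Then f satisfies a pointwise Hölder estimate at the identity with the improved exponent 3α/2: there exist an open neighbourhood W′ of 1 in G with W′ ⊆ W and a constant K ≥ 0 such that ‖ψ(f(x)) − ψ(1_H)‖ ≤ K·‖φ(x) − φ(1_G)‖^{3α/2} for all x ∈ W′. -/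
open scoped Manifold Topology
open Set


lemma chart_mul_linearization
    {E : Type*} [NormedAddCommGroup E] [NormedSpace ℝ E]
    {G : Type*} [TopologicalSpace G] [ChartedSpace E G] [Group G] [LieGroup 𝓘(ℝ, E) (⊤ : ℕ∞) G]
    {ε : ℝ} (hε : 0 < ε) :
    ∃ δ > 0, ∀ a b : E, ‖a‖ ≤ δ → ‖b‖ ≤ δ →
      ‖chartAt E (1 : G) ((chartAt E (1 : G)).symm (a + chartAt E (1 : G) 1) *
          (chartAt E (1 : G)).symm (b + chartAt E (1 : G) 1)) - chartAt E (1 : G) 1 - a - b‖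
        ≤ ε * (‖a‖ + ‖b‖) := by
  set φ := chartAt E (1 : G) with hφ
  set q : E := φ 1 with hq
  set m : E × E → E := fun p => φ (φ.symm (p.1 + q) * φ.symm (p.2 + q)) - q with hm
  have h1src : (1 : G) ∈ φ.source := mem_chart_source E 1
  have hqt : q ∈ φ.target := φ.map_source h1src
  -- differentiability of the chart representation of multiplication
  have hsm : ContMDiffAt (𝓘(ℝ, E).prod 𝓘(ℝ, E)) 𝓘(ℝ, E) ((⊤ : ℕ∞) : WithTop ℕ∞) (fun p : G × G => p.1 * p.2)
      ((1 : G), (1 : G)) := (contMDiff_mul 𝓘(ℝ, E) ((⊤ : ℕ∞) : WithTop ℕ∞)).contMDiffAt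
  rw [contMDiffAt_iff] at hsm
  obtain ⟨-, hsm⟩ := hsm
  simp only [extChartAt_prod, extChartAt_coe, extChartAt_coe_symm, PartialEquiv.prod_symm,
    PartialEquiv.prod_coe, PartialEquiv.prod_coe_symm, modelWithCornersSelf_coe,
    modelWithCornersSelf_coe_symm, Function.comp_def, id_eq,
    ModelWithCorners.range_eq_univ, one_mul] at hsm
  rw [contDiffWithinAt_univ] at hsm
  have hdiff0 : DifferentiableAt ℝ
      (fun x : E × E => φ (φ.symm x.1 * φ.symm x.2)) (q, q) :=
    hsm.differentiableAt (by simp)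
  have hinner : DifferentiableAt ℝ (fun p : E × E => ((p.1 + q, p.2 + q) : E × E)) (0, 0) :=
    ((differentiable_fst.add_const q).prodMk (differentiable_snd.add_const q)).differentiableAt
  have hdm : DifferentiableAt ℝ m (0, 0) := by
    have h0 : (((0 : E) + q, (0 : E) + q) : E × E) = (q, q) := by simp
    rw [← h0] at hdiff0
    exact (hdiff0.comp ((0, 0) : E × E) hinner).sub_const q
  have hL := hdm.hasFDerivAt
  set L := fderiv ℝ m (0, 0) with hLdef
  -- the two partial maps are eventually the identity
  have htarg : ∀ᶠ a : E in 𝓝 (0 : E), a + q ∈ φ.target := by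
    have hc : ContinuousAt (fun a : E => a + q) 0 := by fun_prop
    have : φ.target ∈ 𝓝 ((0 : E) + q) := by
      rw [zero_add]; exact φ.open_target.mem_nhds hqt
    exact hc.preimage_mem_nhds this
  have hsymq : φ.symm ((0 : E) + q) = 1 := by rw [zero_add, hq, φ.left_inv h1src]
  have hc10 : (fun a : E => m (a, 0)) =ᶠ[𝓝 (0 : E)] id := by
    filter_upwards [htarg] with a ha
    simp only [m, id_eq, hsymq, mul_one]
    rw [φ.right_inv ha, add_sub_cancel_right]
  have hc01 : (fun b : E => m (0, b)) =ᶠ[𝓝 (0 : E)] id := by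
    filter_upwards [htarg] with b hb
    simp only [m, id_eq, hsymq, one_mul]
    rw [φ.right_inv hb, add_sub_cancel_right]
  have h_inl : HasFDerivAt (fun a : E => m (a, 0))
      (L.comp (ContinuousLinearMap.inl ℝ E E)) 0 := by
    have h1 : HasFDerivAt m L (ContinuousLinearMap.inl ℝ E E 0) := by
      simpa using hL
    exact h1.comp 0 (ContinuousLinearMap.inl ℝ E E).hasFDerivAt
  have h_inr : HasFDerivAt (fun b : E => m (0, b))
      (L.comp (ContinuousLinearMap.inr ℝ E E)) 0 := by
    have h1 : HasFDerivAt m L (ContinuousLinearMap.inr ℝ E E 0) := by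
      simpa using hL
    exact h1.comp 0 (ContinuousLinearMap.inr ℝ E E).hasFDerivAt
  have hidl : L.comp (ContinuousLinearMap.inl ℝ E E) = ContinuousLinearMap.id ℝ E :=
    h_inl.unique ((hasFDerivAt_id (0 : E)).congr_of_eventuallyEq hc10)
  have hidr : L.comp (ContinuousLinearMap.inr ℝ E E) = ContinuousLinearMap.id ℝ E :=
    h_inr.unique ((hasFDerivAt_id (0 : E)).congr_of_eventuallyEq hc01)
  have hLval : ∀ p : E × E, L p = p.1 + p.2 := by
    intro p
    have hp : p = ((p.1, 0) : E × E) + (0, p.2) := by simp [Prod.ext_iff]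
    have h1 := DFunLike.congr_fun hidl p.1
    have h2 := DFunLike.congr_fun hidr p.2
    simp only [ContinuousLinearMap.comp_apply, ContinuousLinearMap.inl_apply,
      ContinuousLinearMap.inr_apply, ContinuousLinearMap.id_apply] at h1 h2
    conv_lhs => rw [hp]
    rw [map_add, h1, h2]
  have hm00 : m (0, 0) = 0 := by
    simp only [m, hsymq, one_mul]
    exact sub_self _
  have ho := hL.isLittleO.def hε
  rw [Metric.eventually_nhds_iff] at ho
  obtain ⟨δ, hδ0, hδ⟩ := ho
  refine ⟨δ / 2, by linarith, fun a b ha hb => ?_⟩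
  have hz : ((0, 0) : E × E) = 0 := rfl
  have hpd : dist ((a, b) : E × E) (0, 0) < δ := by
    rw [hz, dist_zero_right, Prod.norm_def]
    exact lt_of_le_of_lt (max_le ha hb) (by linarith)
  have h2 := hδ hpd
  rw [hm00] at h2
  simp only [hz, sub_zero] at h2
  rw [hLval] at h2
  have hgoal : ‖m (a, b) - a - b‖ ≤ ε * (‖a‖ + ‖b‖) := by
    calc ‖m (a, b) - a - b‖ = ‖m (a, b) - ((a, b).1 + (a, b).2)‖ := by rw [sub_sub]
      _ ≤ ε * ‖((a, b) : E × E)‖ := h2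
      _ ≤ ε * (‖a‖ + ‖b‖) := by
          apply mul_le_mul_of_nonneg_left _ hε.le
          rw [Prod.norm_def]
          exact max_le (le_add_of_nonneg_right (norm_nonneg b))
            (le_add_of_nonneg_left (norm_nonneg a))
  exact hgoal


lemma chart_ball_subset_of_mem_nhds
    {E : Type*} [NormedAddCommGroup E] [NormedSpace ℝ E]
    {G : Type*} [TopologicalSpace G] [ChartedSpace E G] [One G]
    {U : Set G} (hU : U ∈ 𝓝 (1 : G)) :
    ∃ r > 0, ∀ y ∈ (chartAt E (1 : G)).source,
      ‖chartAt E (1 : G) y - chartAt E (1 : G) 1‖ < r → y ∈ U := by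
  set φ := chartAt E (1 : G) with hφ
  have h1src : (1 : G) ∈ φ.source := mem_chart_source E 1
  have hqt : φ 1 ∈ φ.target := φ.map_source h1src
  have hsc : ContinuousAt φ.symm (φ 1) := φ.symm.continuousAt (by simpa using hqt)
  have hU' : U ∈ 𝓝 (φ.symm (φ 1)) := by rwa [φ.left_inv h1src]
  have hpre : φ.symm ⁻¹' U ∈ 𝓝 (φ 1) := hsc.preimage_mem_nhds hU'
  rw [Metric.mem_nhds_iff] at hpre
  obtain ⟨r, hr0, hr⟩ := hpre
  refine ⟨r, hr0, fun y hy hny => ?_⟩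
  have : φ y ∈ Metric.ball (φ 1) r := by rwa [Metric.mem_ball, dist_eq_norm]
  have := hr this
  rwa [mem_preimage, φ.left_inv hy] at this


lemma beta_rpow_le : ((52:ℝ)/25) ^ ((3:ℝ)/4) ≤ 48/25 := by
  have h1 : ((52:ℝ)/25) ^ ((3:ℝ)/4) = ((((52:ℝ)/25) ^ (3:ℕ) : ℝ)) ^ ((1:ℝ)/4) := by
    rw [← Real.rpow_natCast ((52:ℝ)/25) 3, ← Real.rpow_mul (by norm_num)]
    norm_num
  have h2 : (48/25 : ℝ) = ((((48:ℝ)/25) ^ (4:ℕ) : ℝ)) ^ ((1:ℝ)/4) := by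
    rw [← Real.rpow_natCast ((48:ℝ)/25) 4, ← Real.rpow_mul (by norm_num)]
    norm_num
  rw [h1, h2]
  exact Real.rpow_le_rpow (by positivity) (by norm_num) (by norm_num)

lemma holder_arith {α C t ρ' : ℝ} (n : ℕ) (hα0 : 0 < α) (hα2 : α ≤ 1/2) (hC : 0 ≤ C)
    (ht : 0 < t) (hρ : 0 < ρ') (hge : ρ' ≤ (52/25:ℝ)^(n+1) * t) :
    C * ((52/25:ℝ)^n * t) ^ α
      ≤ (48/25:ℝ)^n * (C * ((52:ℝ)/25) ^ (α/2) / ρ' ^ (α/2) * t ^ (3*α/2)) := by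
  set A : ℝ := 52/25 with hA
  have hA1 : (1:ℝ) < A := by norm_num
  have hA0 : (0:ℝ) < A := by norm_num
  have e1 : ((A:ℝ)^n * t) ^ α = (A^n)^α * t^α :=
    Real.mul_rpow (by positivity) ht.le
  have e2 : t ^ (3*α/2) = t^α * t^(α/2) := by
    rw [← Real.rpow_add ht]; ring_nf
  have e3 : ((A:ℝ)^n)^α * (A^(n+1))^(α/2) = (A^(3*α/2))^n * A^(α/2) := by
    rw [← Real.rpow_natCast A n, ← Real.rpow_natCast A (n+1),
      ← Real.rpow_mul hA0.le, ← Real.rpow_mul hA0.le, ← Real.rpow_add hA0,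
      ← Real.rpow_natCast (A^(3*α/2)) n, ← Real.rpow_mul hA0.le, ← Real.rpow_add hA0]
    congr 1
    push_cast
    ring
  have hkey : (A^(3*α/2) : ℝ)^n ≤ (48/25:ℝ)^n := by
    apply pow_le_pow_left₀ (by positivity)
    calc (A:ℝ)^(3*α/2) ≤ A^((3:ℝ)/4) :=
          Real.rpow_le_rpow_of_exponent_le hA1.le (by linarith)
      _ ≤ 48/25 := beta_rpow_le
  -- lower bound for t^(α/2)
  have htlow : ρ'^(α/2) / (A^(n+1))^(α/2) ≤ t^(α/2) := by
    have h1 : ρ' / A^(n+1) ≤ t := by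
      rw [div_le_iff₀ (by positivity)]
      linarith [hge]
    calc ρ'^(α/2) / (A^(n+1))^(α/2) = (ρ' / A^(n+1))^(α/2) :=
          (Real.div_rpow hρ.le (by positivity) _).symm
      _ ≤ t^(α/2) := Real.rpow_le_rpow (by positivity) h1 (by linarith)
  -- reduce to the coefficient inequality
  rw [e1, e2]
  have hred : C * (A^n)^α ≤ (48/25:ℝ)^n * (C * A^(α/2) / ρ'^(α/2)) * t^(α/2) := by
    have hcoef : (0:ℝ) ≤ (48/25:ℝ)^n * (C * A^(α/2) / ρ'^(α/2)) := by positivity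
    calc C * (A^n)^α
        ≤ (48/25:ℝ)^n * (C * A^(α/2) / ρ'^(α/2)) * (ρ'^(α/2) / (A^(n+1))^(α/2)) := by
          have hρne : ρ'^(α/2) ≠ 0 := by positivity
          have hEq : (48/25:ℝ)^n * (C * A^(α/2) / ρ'^(α/2)) * (ρ'^(α/2) / (A^(n+1))^(α/2))
              = (48/25:ℝ)^n * (C * A^(α/2)) / (A^(n+1))^(α/2) := by
            field_simp
          rw [hEq, le_div_iff₀ (by positivity)]
          calc C * (A^n)^α * (A^(n+1))^(α/2) = C * ((A^n)^α * (A^(n+1))^(α/2)) := by ring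
            _ = C * ((A^(3*α/2))^n * A^(α/2)) := by rw [e3]
            _ ≤ C * ((48/25:ℝ)^n * A^(α/2)) := by
                apply mul_le_mul_of_nonneg_left _ hC
                exact mul_le_mul_of_nonneg_right hkey (by positivity)
            _ = (48/25:ℝ)^n * (C * A^(α/2)) := by ring
      _ ≤ (48/25:ℝ)^n * (C * A^(α/2) / ρ'^(α/2)) * t^(α/2) :=
          mul_le_mul_of_nonneg_left htlow hcoef
  calc C * ((A^n)^α * t^α) = (C * (A^n)^α) * t^α := by ring
    _ ≤ ((48/25:ℝ)^n * (C * A^(α/2) / ρ'^(α/2)) * t^(α/2)) * t^α :=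
        mul_le_mul_of_nonneg_right hred (by positivity)
    _ = (48/25:ℝ)^n * (C * A^(α/2) / ρ'^(α/2) * (t^α * t^(α/2))) := by ring

/-- A homomorphism between Banach Lie groups which is `α`-Hölder on a chart
neighbourhood of the identity with `α ∈ (0, 1/2]` satisfies a pointwise Hölder estimate
at the identity with the improved exponent `3α/2`. -/
theorem holder_exponent_improvement_at_one
    {E : Type*} [NormedAddCommGroup E] [NormedSpace ℝ E] [CompleteSpace E]
    {F : Type*} [NormedAddCommGroup F] [NormedSpace ℝ F] [CompleteSpace F]
    {G : Type*} [TopologicalSpace G] [ChartedSpace E G] [Group G] [LieGroup 𝓘(ℝ, E) (⊤ : ℕ∞) G]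
    {H : Type*} [TopologicalSpace H] [ChartedSpace F H] [Group H] [LieGroup 𝓘(ℝ, F) (⊤ : ℕ∞) H]
    {α : ℝ} (hα : α ∈ Set.Ioc (0 : ℝ) (1 / 2 : ℝ))
    (f : G →* H)
    {W : Set G} (hWopen : IsOpen W) (hW1 : (1 : G) ∈ W)
    (hWsrc : W ⊆ (chartAt E (1 : G)).source)
    (hfW : f '' W ⊆ (chartAt F (1 : H)).source)
    {C : ℝ} (hC : 0 ≤ C)
    (hHolder : ∀ x ∈ W, ∀ y ∈ W,
      ‖chartAt F (1 : H) (f x) - chartAt F (1 : H) (f y)‖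
        ≤ C * ‖chartAt E (1 : G) x - chartAt E (1 : G) y‖ ^ α) :
    ∃ W' : Set G, IsOpen W' ∧ (1 : G) ∈ W' ∧ W' ⊆ W ∧
      ∃ K ≥ (0 : ℝ), ∀ x ∈ W',
        ‖chartAt F (1 : H) (f x) - chartAt F (1 : H) (1 : H)‖
          ≤ K * ‖chartAt E (1 : G) x - chartAt E (1 : G) (1 : G)‖ ^ (3 * α / 2) := by
  classical
  obtain ⟨hα0, hα2⟩ := hα
  set φ := chartAt E (1 : G) with hφ
  set ψ := chartAt F (1 : H) with hψ
  have h1src : (1 : G) ∈ φ.source := mem_chart_source E 1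
  -- Hölder estimate to the identity
  have hu : ∀ x ∈ W, ‖ψ (f x) - ψ 1‖ ≤ C * ‖φ x - φ 1‖ ^ α := by
    intro x hx
    have h := hHolder x hx 1 hW1
    rwa [map_one] at h
  -- linearization constants
  obtain ⟨δG, hδG0, hδG⟩ := chart_mul_linearization (E := E) (G := G)
    (ε := 1/25) (by norm_num)
  obtain ⟨δH, hδH0, hδH⟩ := chart_mul_linearization (E := F) (G := H)
    (ε := 1/25) (by norm_num)
  -- the chart balls
  set B : ℝ → Set G := fun r => φ.source ∩ φ ⁻¹' Metric.ball (φ 1) r with hB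
  have hmemB : ∀ {r : ℝ} {y : G}, y ∈ B r ↔ y ∈ φ.source ∧ ‖φ y - φ 1‖ < r := by
    intro r y
    simp [hB, Metric.mem_ball, dist_eq_norm]
  have hBopen : ∀ r, IsOpen (B r) := fun r =>
    φ.continuousOn.isOpen_inter_preimage φ.open_source Metric.isOpen_ball
  -- choice of ρ
  obtain ⟨r₁, hr₁0, hr₁⟩ := chart_ball_subset_of_mem_nhds (G := G) (E := E)
    (hWopen.mem_nhds hW1)
  set ρ : ℝ := min (min r₁ δG) ((δH / (C+1)) ^ (α⁻¹)) with hρdef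
  have hρ0 : 0 < ρ := by
    refine lt_min (lt_min hr₁0 hδG0) ?_
    exact Real.rpow_pos_of_pos (div_pos hδH0 (by linarith)) _
  have hρr₁ : ρ ≤ r₁ := le_trans (min_le_left _ _) (min_le_left _ _)
  have hρδG : ρ ≤ δG := le_trans (min_le_left _ _) (min_le_right _ _)
  have hCρ : C * ρ ^ α ≤ δH := by
    have h1 : ρ ^ α ≤ ((δH/(C+1)) ^ (α⁻¹)) ^ α :=
      Real.rpow_le_rpow hρ0.le (min_le_right _ _) hα0.le
    rw [← Real.rpow_mul (by positivity), inv_mul_cancel₀ hα0.ne', Real.rpow_one] at h1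
    have h2 : C * ρ ^ α ≤ C * (δH / (C+1)) := mul_le_mul_of_nonneg_left h1 hC
    refine h2.trans ?_
    rw [mul_div_assoc', div_le_iff₀ (by linarith)]
    nlinarith
  have hBW : B ρ ⊆ W := by
    intro y hy
    obtain ⟨hy1, hy2⟩ := hmemB.mp hy
    exact hr₁ y hy1 (lt_of_lt_of_le hy2 hρr₁)
  -- squaring continuity and ρ'
  haveI : ContinuousMul G := continuousMul_of_contMDiffMul 𝓘(ℝ, E) ((⊤ : ℕ∞) : WithTop ℕ∞)
  have hsqc : ContinuousAt (fun y : G => y * y) 1 :=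
    (continuous_mul.comp (continuous_id.prodMk continuous_id)).continuousAt
  have hB1 : (1 : G) ∈ B ρ := hmemB.mpr ⟨h1src, by simpa using hρ0⟩
  have hSnh : (fun y : G => y * y) ⁻¹' (B ρ) ∈ 𝓝 (1 : G) := by
    apply hsqc.preimage_mem_nhds
    simpa using (hBopen ρ).mem_nhds hB1
  obtain ⟨r₂, hr₂0, hr₂⟩ := chart_ball_subset_of_mem_nhds (E := E) (G := G) hSnh
  set ρ' : ℝ := min r₂ ρ with hρ'def
  have hρ'0 : 0 < ρ' := lt_min hr₂0 hρ0
  have hρ'ρ : ρ' ≤ ρ := min_le_right _ _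
  -- the single squaring steps
  have hstepG : ∀ y : G, y ∈ φ.source → ‖φ y - φ 1‖ < ρ' →
      (y * y ∈ B ρ ∧ ‖φ (y * y) - φ 1‖ ≤ (52/25) * ‖φ y - φ 1‖) := by
    intro y hy hylt
    have hyδ : ‖φ y - φ 1‖ ≤ δG := le_trans hylt.le (le_trans hρ'ρ hρδG)
    have hmem : y * y ∈ B ρ := hr₂ y hy (lt_of_lt_of_le hylt (min_le_left _ _))
    refine ⟨hmem, ?_⟩
    have hid : φ (φ.symm ((φ y - φ 1) + φ 1) * φ.symm ((φ y - φ 1) + φ 1)) - φ 1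
        - (φ y - φ 1) - (φ y - φ 1) = φ (y * y) - φ 1 - (φ y - φ 1) - (φ y - φ 1) := by
      rw [sub_add_cancel, φ.left_inv hy]
    have hest := hδG (φ y - φ 1) (φ y - φ 1) hyδ hyδ
    rw [hid] at hest
    have habel : φ (y * y) - φ 1 =
        (φ (y * y) - φ 1 - (φ y - φ 1) - (φ y - φ 1)) + (φ y - φ 1) + (φ y - φ 1) := by
      abel
    calc ‖φ (y * y) - φ 1‖
        ≤ ‖φ (y * y) - φ 1 - (φ y - φ 1) - (φ y - φ 1)‖ + ‖φ y - φ 1‖ + ‖φ y - φ 1‖ := by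
          conv_lhs => rw [habel]
          exact norm_add₃_le
      _ ≤ (52/25) * ‖φ y - φ 1‖ := by linarith
  have hstepH : ∀ y : G, y ∈ W → ‖ψ (f y) - ψ 1‖ ≤ δH →
      (48/25) * ‖ψ (f y) - ψ 1‖ ≤ ‖ψ (f (y * y)) - ψ 1‖ := by
    intro y hyW hble
    have hfy : f y ∈ ψ.source := hfW ⟨y, hyW, rfl⟩
    have hid : ψ (ψ.symm ((ψ (f y) - ψ 1) + ψ 1) * ψ.symm ((ψ (f y) - ψ 1) + ψ 1)) - ψ 1
        - (ψ (f y) - ψ 1) - (ψ (f y) - ψ 1)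
        = ψ (f (y * y)) - ψ 1 - (ψ (f y) - ψ 1) - (ψ (f y) - ψ 1) := by
      rw [sub_add_cancel, ψ.left_inv hfy, ← map_mul]
    have hest := hδH (ψ (f y) - ψ 1) (ψ (f y) - ψ 1) hble hble
    rw [hid] at hest
    have hb2 : ‖(ψ (f y) - ψ 1) + (ψ (f y) - ψ 1)‖ = 2 * ‖ψ (f y) - ψ 1‖ := by
      rw [← two_smul ℝ (ψ (f y) - ψ 1), norm_smul]
      simp
    have h3 : ‖(ψ (f y) - ψ 1) + (ψ (f y) - ψ 1)‖
        ≤ ‖ψ (f (y * y)) - ψ 1 - (ψ (f y) - ψ 1) - (ψ (f y) - ψ 1)‖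
          + ‖ψ (f (y * y)) - ψ 1‖ := by
      have heq : (ψ (f y) - ψ 1) + (ψ (f y) - ψ 1)
          = -(ψ (f (y * y)) - ψ 1 - (ψ (f y) - ψ 1) - (ψ (f y) - ψ 1))
            + (ψ (f (y * y)) - ψ 1) := by abel
      rw [heq]
      exact (norm_add_le _ _).trans (by rw [norm_neg])
    linarith
  -- the improved constant
  refine ⟨B ρ', hBopen ρ', hmemB.mpr ⟨h1src, by simpa using hρ'0⟩,
    fun y hy => hBW (hmemB.mpr ⟨(hmemB.mp hy).1, lt_of_lt_of_le (hmemB.mp hy).2 hρ'ρ⟩),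
    C * ((52:ℝ)/25) ^ (α/2) / ρ' ^ (α/2), by positivity, ?_⟩
  intro x hx
  obtain ⟨hxsrc, hxlt⟩ := hmemB.mp hx
  set t : ℝ := ‖φ x - φ 1‖ with htdef
  have hxW : x ∈ W := hBW (hmemB.mpr ⟨hxsrc, lt_of_lt_of_le hxlt hρ'ρ⟩)
  have ht0 : 0 ≤ t := norm_nonneg _
  -- the iterates
  have Q : ∀ k : ℕ, (52/25:ℝ)^k * t < ρ' →
      x ^ (2^k) ∈ φ.source ∧ ‖φ (x ^ (2^k)) - φ 1‖ ≤ (52/25:ℝ)^k * t := by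
    intro k
    induction k with
    | zero =>
      intro _
      rw [pow_zero, pow_one, pow_zero, one_mul]
      exact ⟨hxsrc, le_rfl⟩
    | succ k ih =>
      intro hk1
      have hmono : (52/25:ℝ)^k * t ≤ (52/25:ℝ)^(k+1) * t := by
        apply mul_le_mul_of_nonneg_right _ ht0
        exact pow_le_pow_right₀ (by norm_num) (Nat.le_succ k)
      have hk : (52/25:ℝ)^k * t < ρ' := lt_of_le_of_lt hmono hk1
      obtain ⟨hsrc, hbd⟩ := ih hk
      have hlt : ‖φ (x ^ (2^k)) - φ 1‖ < ρ' := lt_of_le_of_lt hbd hk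
      have hstep := hstepG (x ^ (2^k)) hsrc hlt
      have hpow : x ^ (2^(k+1)) = x ^ (2^k) * x ^ (2^k) := by
        rw [pow_succ, pow_mul, sq]
      refine ⟨by rw [hpow]; exact (hmemB.mp hstep.1).1, ?_⟩
      rw [hpow]
      calc ‖φ (x ^ (2^k) * x ^ (2^k)) - φ 1‖ ≤ (52/25) * ‖φ (x ^ (2^k)) - φ 1‖ := hstep.2
        _ ≤ (52/25) * ((52/25:ℝ)^k * t) := by
            exact mul_le_mul_of_nonneg_left hbd (by norm_num)
        _ = (52/25:ℝ)^(k+1) * t := by ring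
  have R : ∀ n : ℕ, (52/25:ℝ)^n * t < ρ' →
      (48/25:ℝ)^n * ‖ψ (f x) - ψ 1‖ ≤ ‖ψ (f (x ^ (2^n))) - ψ 1‖ := by
    intro n
    induction n with
    | zero =>
      intro _
      rw [pow_zero, one_mul, pow_zero, pow_one]
    | succ n ih =>
      intro h1
      have hmono : (52/25:ℝ)^n * t ≤ (52/25:ℝ)^(n+1) * t := by
        apply mul_le_mul_of_nonneg_right _ ht0
        exact pow_le_pow_right₀ (by norm_num) (Nat.le_succ n)
      have hn : (52/25:ℝ)^n * t < ρ' := lt_of_le_of_lt hmono h1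
      obtain ⟨hsrc, hbd⟩ := Q n hn
      have hyW : x ^ (2^n) ∈ W :=
        hBW (hmemB.mpr ⟨hsrc, lt_of_le_of_lt hbd (lt_of_lt_of_le hn hρ'ρ)⟩)
      have hub : ‖ψ (f (x ^ (2^n))) - ψ 1‖ ≤ δH := by
        refine (hu _ hyW).trans (le_trans ?_ hCρ)
        apply mul_le_mul_of_nonneg_left _ hC
        exact Real.rpow_le_rpow (norm_nonneg _)
          (le_trans hbd (le_trans hn.le hρ'ρ)) hα0.le
      have hstep := hstepH (x ^ (2^n)) hyW hub
      have hpow : x ^ (2^(n+1)) = x ^ (2^n) * x ^ (2^n) := by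
        rw [pow_succ, pow_mul, sq]
      rw [hpow]
      calc (48/25:ℝ)^(n+1) * ‖ψ (f x) - ψ 1‖
          = (48/25) * ((48/25:ℝ)^n * ‖ψ (f x) - ψ 1‖) := by ring
        _ ≤ (48/25) * ‖ψ (f (x ^ (2^n))) - ψ 1‖ :=
            mul_le_mul_of_nonneg_left (ih hn) (by norm_num)
        _ ≤ ‖ψ (f (x ^ (2^n) * x ^ (2^n))) - ψ 1‖ := hstep
  -- conclude
  by_cases htz : t = 0
  · have h := hu x hxW
    have htz' : ‖φ x - φ 1‖ = 0 := by rw [← htdef]; exact htz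
    rw [htz', Real.zero_rpow hα0.ne', mul_zero] at h
    rw [htz, Real.zero_rpow (by positivity : (0:ℝ) < 3*α/2).ne', mul_zero]
    exact h
  · have htpos : 0 < t := lt_of_le_of_ne ht0 (Ne.symm htz)
    have hex : ∃ m : ℕ, ρ' ≤ (52/25:ℝ)^m * t := by
      obtain ⟨m, hm⟩ := pow_unbounded_of_one_lt (ρ'/t) (by norm_num : (1:ℝ) < 52/25)
      refine ⟨m, ?_⟩
      rw [div_lt_iff₀ htpos] at hm
      linarith
    have hspec : ρ' ≤ (52/25:ℝ)^(Nat.find hex) * t := Nat.find_spec hex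
    have hne : Nat.find hex ≠ 0 := by
      intro h0
      rw [h0, pow_zero, one_mul] at hspec
      exact absurd hspec (not_le.mpr hxlt)
    obtain ⟨n, hn⟩ : ∃ n, Nat.find hex = n + 1 :=
      ⟨Nat.find hex - 1, (Nat.succ_pred_eq_of_ne_zero hne).symm⟩
    have hlt : (52/25:ℝ)^n * t < ρ' :=
      lt_of_not_ge (Nat.find_min hex (by omega))
    have hge : ρ' ≤ (52/25:ℝ)^(n+1) * t := by rw [← hn]; exact hspec
    obtain ⟨hsrc, hbd⟩ := Q n hlt
    have hyW : x ^ (2^n) ∈ W :=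
      hBW (hmemB.mpr ⟨hsrc, lt_of_le_of_lt hbd (lt_of_lt_of_le hlt hρ'ρ)⟩)
    have hfinal : (48/25:ℝ)^n * ‖ψ (f x) - ψ 1‖ ≤ C * ((52/25:ℝ)^n * t) ^ α := by
      refine (R n hlt).trans ((hu _ hyW).trans ?_)
      apply mul_le_mul_of_nonneg_left _ hC
      exact Real.rpow_le_rpow (norm_nonneg _) hbd hα0.le
    have harith := holder_arith n hα0 hα2 hC htpos hρ'0 hge
    have hγn : (0:ℝ) < (48/25:ℝ)^n := by positivity
    rw [← mul_le_mul_iff_of_pos_left hγn]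
    exact hfinal.trans harith
end

section
/- Let E and F be real Banach spaces, G and H Lie groups modelled on E and F, α ∈ (1/2, 1], and f : G → H a group homomorphism which is α-Hölder on a chart neighbourhood of the identity (with charts φ of G at 1 and ψ of H at 1). Let γ : ℝ → G be a smooth curve with γ(0) = 1. Then there exists δ > 0 such that f(γ(s)) lies in the source of ψ for all |s| ≤ δ, for every t with 0 < |t| ≤ δ the limit L(t) := lim_{n→∞} 2ⁿ·(ψ(f(γ(2⁻ⁿ·t))) − ψ(1_H)) exists in F, and moreover the vector L(t)/t ∈ F is the same for all t with 0 < |t| ≤ δ. -/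
open scoped Manifold Topology
open Filter Metric Set Function

private lemma rect_bound {E₁ E₂ F : Type*} [NormedAddCommGroup E₁] [NormedSpace ℝ E₁]
    [NormedAddCommGroup E₂] [NormedSpace ℝ E₂] [NormedAddCommGroup F] [NormedSpace ℝ F]
    {θ : E₁ × E₂ → F} {p : E₁ × E₂} (hθ : ContDiffAt ℝ 2 θ p) :
    ∃ r > (0:ℝ), ∃ K ≥ (0:ℝ), ∀ u v, ‖u - p.1‖ ≤ r → ‖v - p.2‖ ≤ r →
      ‖θ (u, v) - θ (u, p.2) - θ (p.1, v) + θ p‖ ≤ K * ‖u - p.1‖ * ‖v - p.2‖ := by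
  have h1 : ContDiffAt ℝ 1 (fderiv ℝ θ) p := hθ.fderiv_right le_rfl
  obtain ⟨K, t, ht, hlip⟩ := h1.exists_lipschitzOnWith
  obtain ⟨U, hU, hUdiff⟩ := hθ.contDiffOn (m := 1) (by norm_num) (by simp)
  obtain ⟨U', hU'U, hU'open, hpU'⟩ := _root_.mem_nhds_iff.mp hU
  obtain ⟨r, hr0, hball⟩ := Metric.nhds_basis_closedBall.mem_iff.mp
    (Filter.inter_mem ht (hU'open.mem_nhds hpU'))
  have hdiff : ∀ q ∈ U', DifferentiableAt ℝ θ q := fun q hq =>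
    (((hUdiff.mono hU'U).differentiableOn one_ne_zero) q hq).differentiableAt (hU'open.mem_nhds hq)
  refine ⟨r, hr0, K, K.coe_nonneg, ?_⟩
  intro u v hu hv
  have hmem : ∀ w z, ‖w - p.1‖ ≤ r → ‖z - p.2‖ ≤ r → (w, z) ∈ Metric.closedBall p r := by
    intro w z hw hz
    rw [Metric.mem_closedBall, Prod.dist_eq]
    simp only [dist_eq_norm]
    exact max_le hw hz
  set D : E₁ → (E₁ →L[ℝ] F) := fun w =>
    ((fderiv ℝ θ (w, v)) - (fderiv ℝ θ (w, p.2))).comp (ContinuousLinearMap.inl ℝ E₁ E₂) with hD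
  have key : ∀ w ∈ Metric.closedBall p.1 r,
      HasFDerivWithinAt (fun w => θ (w, v) - θ (w, p.2)) (D w) (Metric.closedBall p.1 r) w := by
    intro w hw
    have hw' : ‖w - p.1‖ ≤ r := by simpa [dist_eq_norm] using hw
    have hwv : (w, v) ∈ U' := (hball (hmem w v hw' hv)).2
    have hwp : (w, p.2) ∈ U' := (hball (hmem w p.2 hw' (by simp [hr0.le]))).2
    have h1v : HasFDerivAt (fun w => θ (w, v))
        ((fderiv ℝ θ (w, v)).comp (ContinuousLinearMap.inl ℝ E₁ E₂)) w :=
      ((hdiff _ hwv).hasFDerivAt).comp w (hasFDerivAt_prodMk_left w v)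
    have h1p : HasFDerivAt (fun w => θ (w, p.2))
        ((fderiv ℝ θ (w, p.2)).comp (ContinuousLinearMap.inl ℝ E₁ E₂)) w :=
      ((hdiff _ hwp).hasFDerivAt).comp w (hasFDerivAt_prodMk_left w p.2)
    have := (h1v.sub h1p).hasFDerivWithinAt (s := Metric.closedBall p.1 r)
    convert this using 1 <;> rfl
  have bound : ∀ w ∈ Metric.closedBall p.1 r, ‖D w‖ ≤ (K : ℝ) * ‖v - p.2‖ := by
    intro w hw
    have hw' : ‖w - p.1‖ ≤ r := by simpa [dist_eq_norm] using hw
    have hwv : (w, v) ∈ t := (hball (hmem w v hw' hv)).1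
    have hwp : (w, p.2) ∈ t := (hball (hmem w p.2 hw' (by simp [hr0.le]))).1
    have hDl : ‖fderiv ℝ θ (w, v) - fderiv ℝ θ (w, p.2)‖ ≤ (K : ℝ) * ‖v - p.2‖ := by
      have := hlip.dist_le_mul _ hwv _ hwp
      rw [dist_eq_norm] at this
      refine this.trans ?_
      gcongr
      rw [Prod.dist_eq]
      simp [dist_eq_norm]
    apply ContinuousLinearMap.opNorm_le_bound _ (by positivity)
    intro x
    have : D w x = (fderiv ℝ θ (w, v) - fderiv ℝ θ (w, p.2)) (x, 0) := rfl
    rw [this]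
    calc ‖(fderiv ℝ θ (w, v) - fderiv ℝ θ (w, p.2)) (x, 0)‖
        ≤ ‖fderiv ℝ θ (w, v) - fderiv ℝ θ (w, p.2)‖ * ‖(x, (0:E₂))‖ :=
          ContinuousLinearMap.le_opNorm _ _
      _ ≤ (K : ℝ) * ‖v - p.2‖ * ‖x‖ := by
          have hx0 : ‖(x, (0:E₂))‖ = ‖x‖ := by simp [Prod.norm_def]
          rw [hx0]; gcongr
  have hp1 : p.1 ∈ Metric.closedBall p.1 r := Metric.mem_closedBall_self hr0.le
  have hu1 : u ∈ Metric.closedBall p.1 r := by simpa [dist_eq_norm] using hu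
  have hmv := (convex_closedBall p.1 r).norm_image_sub_le_of_norm_hasFDerivWithin_le key bound
    hp1 hu1
  calc ‖θ (u, v) - θ (u, p.2) - θ (p.1, v) + θ p‖
      = ‖(θ (u, v) - θ (u, p.2)) - (θ (p.1, v) - θ (p.1, p.2))‖ := by
        rw [← Prod.mk.eta (p := p)]; congr 1; abel
    _ ≤ (K : ℝ) * ‖v - p.2‖ * ‖u - p.1‖ := hmv
    _ = (K : ℝ) * ‖u - p.1‖ * ‖v - p.2‖ := by ring

set_option maxHeartbeats 4000000 in
/-- For an `α`-Hölder homomorphism (`α ∈ (1/2, 1]`) between Banach Lie groups and a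
smooth curve `γ` through the identity, the limits
`L(t) = lim_n 2ⁿ·(ψ(f(γ(2⁻ⁿ t))) − ψ(1))` exist for all small `t ≠ 0`, and `L(t)/t`
is independent of `t`: there is `v ∈ F` with `L(t) = t • v` for all such `t`. -/
theorem dyadic_limit_exists_and_independent
    {E : Type*} [NormedAddCommGroup E] [NormedSpace ℝ E] [CompleteSpace E]
    {F : Type*} [NormedAddCommGroup F] [NormedSpace ℝ F] [CompleteSpace F]
    {G : Type*} [TopologicalSpace G] [ChartedSpace E G] [Group G] [LieGroup 𝓘(ℝ, E) (⊤ : ℕ∞) G]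
    {H : Type*} [TopologicalSpace H] [ChartedSpace F H] [Group H] [LieGroup 𝓘(ℝ, F) (⊤ : ℕ∞) H]
    {α : ℝ} (hα : α ∈ Set.Ioc (1 / 2 : ℝ) 1)
    (f : G →* H)
    (hf : ∃ W : Set G, IsOpen W ∧ (1 : G) ∈ W ∧ W ⊆ (chartAt E (1 : G)).source ∧
      f '' W ⊆ (chartAt F (1 : H)).source ∧
      ∃ C ≥ (0 : ℝ), ∀ x ∈ W, ∀ y ∈ W,
        ‖chartAt F (1 : H) (f x) - chartAt F (1 : H) (f y)‖
          ≤ C * ‖chartAt E (1 : G) x - chartAt E (1 : G) y‖ ^ α)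
    (γ : ℝ → G) (hγ : ContMDiff 𝓘(ℝ, ℝ) 𝓘(ℝ, E) (⊤ : ℕ∞) γ) (hγ0 : γ 0 = 1) :
    ∃ δ > (0 : ℝ),
      (∀ s : ℝ, |s| ≤ δ → f (γ s) ∈ (chartAt F (1 : H)).source) ∧
      ∃ v : F, ∀ t : ℝ, 0 < |t| → |t| ≤ δ →
        Filter.Tendsto
          (fun n : ℕ => (2 : ℝ) ^ n •
            (chartAt F (1 : H) (f (γ ((2 : ℝ)⁻¹ ^ n * t))) - chartAt F (1 : H) (1 : H)))
          Filter.atTop (𝓝 (t • v)) := by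
  obtain ⟨hα2, hα1⟩ := hα
  have hα0 : (0:ℝ) < α := lt_trans (by norm_num) hα2
  obtain ⟨W, hWopen, hW1, hWφ, hWψ, C, hC0, hHolder⟩ := hf
  set φ : OpenPartialHomeomorph G E := chartAt E (1 : G) with hφdef
  set ψ : OpenPartialHomeomorph H F := chartAt F (1 : H) with hψdef
  have h1H : (1 : H) ∈ ψ.source := mem_chart_source F 1
  have hψ1 : ψ (1:H) ∈ ψ.target := ψ.map_source h1H
  have hγcont : Continuous γ := hγ.continuous
  -- chart reading of γ
  have hc : ContDiffAt ℝ 2 (fun s => φ (γ s)) 0 := by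
    have h := (contMDiffAt_iff.mp (hγ 0)).2
    rw [hγ0] at h
    simp only [extChartAt_model_space_eq_id, PartialEquiv.refl_symm, PartialEquiv.refl_coe,
      comp_id, id, contDiffWithinAt_univ, modelWithCornersSelf_coe, range_id] at h
    have heq : (↑(extChartAt 𝓘(ℝ, E) (1:G)) ∘ γ) = fun s => φ (γ s) := by
      ext s; simp [extChartAt, OpenPartialHomeomorph.extend, hφdef]
    rw [heq] at h
    exact h.of_le (by decide)
  -- chart reading of the multiplied curve
  have hγ2 : ContMDiff 𝓘(ℝ, ℝ × ℝ) 𝓘(ℝ, E) (⊤ : ℕ∞) (fun p : ℝ × ℝ => γ p.1 * γ p.2) := by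
    have h1 : ContMDiff 𝓘(ℝ, ℝ × ℝ) 𝓘(ℝ, ℝ) (⊤ : ℕ∞) (fun p : ℝ × ℝ => p.1) :=
      contMDiff_iff_contDiff.mpr contDiff_fst
    have h2 : ContMDiff 𝓘(ℝ, ℝ × ℝ) 𝓘(ℝ, ℝ) (⊤ : ℕ∞) (fun p : ℝ × ℝ => p.2) :=
      contMDiff_iff_contDiff.mpr contDiff_snd
    exact (hγ.comp h1).mul (hγ.comp h2)
  have hθsm : ContDiffAt ℝ 2 (fun p : ℝ × ℝ => φ (γ p.1 * γ p.2)) (0, 0) := by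
    have h := (contMDiffAt_iff.mp (hγ2 (0, 0))).2
    simp only [hγ0, mul_one] at h
    simp only [extChartAt_model_space_eq_id, PartialEquiv.refl_symm, PartialEquiv.refl_coe,
      comp_id, id, contDiffWithinAt_univ, modelWithCornersSelf_coe, range_id] at h
    have heq : (↑(extChartAt 𝓘(ℝ, E) (1:G)) ∘ (fun p : ℝ × ℝ => γ p.1 * γ p.2))
        = fun p : ℝ × ℝ => φ (γ p.1 * γ p.2) := by
      ext p; simp [extChartAt, OpenPartialHomeomorph.extend, hφdef]
    rw [heq] at h
    exact h.of_le (by decide)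
  -- chart reading of multiplication in H
  have hBsm : ContDiffAt ℝ 2 (fun q : F × F => ψ (ψ.symm q.1 * ψ.symm q.2)) (ψ 1, ψ 1) := by
    have hsymm : ContMDiffAt 𝓘(ℝ, F) 𝓘(ℝ, F) (⊤ : ℕ∞) ψ.symm (ψ (1:H)) :=
      (contMDiffOn_chart_symm (x := (1:H))).contMDiffAt (ψ.open_target.mem_nhds hψ1)
    have hfst : ContMDiffAt 𝓘(ℝ, F × F) 𝓘(ℝ, F) (⊤ : ℕ∞) (fun q : F × F => q.1) (ψ 1, ψ 1) :=
      (contMDiff_iff_contDiff.mpr contDiff_fst).contMDiffAt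
    have hsnd : ContMDiffAt 𝓘(ℝ, F × F) 𝓘(ℝ, F) (⊤ : ℕ∞) (fun q : F × F => q.2) (ψ 1, ψ 1) :=
      (contMDiff_iff_contDiff.mpr contDiff_snd).contMDiffAt
    have h1 : ContMDiffAt 𝓘(ℝ, F × F) 𝓘(ℝ, F) (⊤ : ℕ∞) (fun q : F × F => ψ.symm q.1) (ψ 1, ψ 1) :=
      hsymm.comp (((ψ 1 : F), (ψ 1 : F)) : F × F) hfst
    have h2 : ContMDiffAt 𝓘(ℝ, F × F) 𝓘(ℝ, F) (⊤ : ℕ∞) (fun q : F × F => ψ.symm q.2) (ψ 1, ψ 1) :=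
      hsymm.comp (((ψ 1 : F), (ψ 1 : F)) : F × F) hsnd
    have hmul : ContMDiffAt 𝓘(ℝ, F × F) 𝓘(ℝ, F) (⊤ : ℕ∞)
        (fun q : F × F => ψ.symm q.1 * ψ.symm q.2) (ψ 1, ψ 1) := h1.mul h2
    have hchart : ContMDiffAt 𝓘(ℝ, F) 𝓘(ℝ, F) (⊤ : ℕ∞) ψ (ψ.symm (ψ (1:H)) * ψ.symm (ψ (1:H))) := by
      rw [ψ.left_inv h1H, mul_one]
      exact (contMDiffOn_chart (x := (1:H))).contMDiffAt (ψ.open_source.mem_nhds h1H)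
    have hco := hchart.comp (((ψ 1 : F), (ψ 1 : F)) : F × F) hmul
    exact (contMDiffAt_iff_contDiffAt.mp hco).of_le (by decide)
  -- Lipschitz bound for the chart reading of γ
  obtain ⟨KA, tA, htA, hlipA⟩ := (hc.of_le one_le_two).exists_lipschitzOnWith
  obtain ⟨rA, hrA0, hrAsub⟩ := Metric.nhds_basis_closedBall.mem_iff.mp htA
  have hlipc : ∀ a b : ℝ, |a| ≤ rA → |b| ≤ rA → ‖φ (γ a) - φ (γ b)‖ ≤ (KA:ℝ) * |a - b| := by
    intro a b ha hb
    have h := hlipA.dist_le_mul a (hrAsub (by simpa [Real.dist_eq] using ha))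
      b (hrAsub (by simpa [Real.dist_eq] using hb))
    simpa [dist_eq_norm, Real.dist_eq] using h
  -- rectangle bounds
  have hcsum : ContDiffAt ℝ 2 (fun p : ℝ × ℝ => φ (γ (p.1 + p.2))) (0, 0) := by
    have h := ContDiffAt.comp (f := fun p : ℝ × ℝ => p.1 + p.2) ((0:ℝ), (0:ℝ))
      (by simpa using hc) ((contDiff_fst.add contDiff_snd).contDiffAt)
    exact h
  obtain ⟨rη, hrη0, Kη, hKη0, hKηb⟩ := rect_bound hcsum
  have hrectC : ∀ a b : ℝ, |a| ≤ rη → |b| ≤ rη →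
      ‖φ (γ (a + b)) - φ (γ a) - φ (γ b) + φ (1:G)‖ ≤ Kη * |a| * |b| := by
    intro a b ha hb
    have h := hKηb a b (by simpa using ha) (by simpa using hb)
    simpa [Real.norm_eq_abs, hγ0] using h
  obtain ⟨rθ, hrθ0, Kθ, hKθ0, hKθb⟩ := rect_bound hθsm
  have hrectT : ∀ a b : ℝ, |a| ≤ rθ → |b| ≤ rθ →
      ‖φ (γ a * γ b) - φ (γ a) - φ (γ b) + φ (1:G)‖ ≤ Kθ * |a| * |b| := by
    intro a b ha hb
    have h := hKθb a b (by simpa using ha) (by simpa using hb)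
    simpa [Real.norm_eq_abs, hγ0] using h
  obtain ⟨rB, hrB0, KB, hKB0, hKBb⟩ := rect_bound hBsm
  have hmulH : ∀ x ∈ ψ.source, ∀ y ∈ ψ.source, ‖ψ x - ψ (1:H)‖ ≤ rB → ‖ψ y - ψ (1:H)‖ ≤ rB →
      ‖ψ (x * y) - ψ x - ψ y + ψ (1:H)‖ ≤ KB * ‖ψ x - ψ (1:H)‖ * ‖ψ y - ψ (1:H)‖ := by
    intro x hx y hy hxb hyb
    have h := hKBb (ψ x) (ψ y) (by simpa using hxb) (by simpa using hyb)
    simpa [ψ.left_inv hx, ψ.left_inv hy, ψ.left_inv h1H, mul_one, one_mul] using h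
  -- neighbourhood memberships
  obtain ⟨r1, hr10, hr1b⟩ := Metric.nhds_basis_closedBall.mem_iff.mp
    (hγcont.continuousAt.preimage_mem_nhds (show W ∈ 𝓝 (γ 0) by
      rw [hγ0]; exact hWopen.mem_nhds hW1))
  have hr1 : ∀ s : ℝ, |s| ≤ r1 → γ s ∈ W := fun s hs =>
    hr1b (by simpa [Real.dist_eq] using hs)
  haveI : ContinuousMul G := continuousMul_of_contMDiffMul 𝓘(ℝ, E) (⊤ : ℕ∞)
  have hcont2 : Continuous fun p : ℝ × ℝ => γ p.1 * γ p.2 :=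
    (hγcont.comp continuous_fst).mul (hγcont.comp continuous_snd)
  have hpre2 : (fun p : ℝ × ℝ => γ p.1 * γ p.2) ⁻¹' W ∈ 𝓝 (((0:ℝ), (0:ℝ))) := by
    refine hcont2.continuousAt.preimage_mem_nhds ?_
    show W ∈ 𝓝 (γ ((0:ℝ), (0:ℝ)).1 * γ ((0:ℝ), (0:ℝ)).2)
    simp only [hγ0, mul_one]
    exact hWopen.mem_nhds hW1
  obtain ⟨r2, hr20, hr2b⟩ := Metric.nhds_basis_closedBall.mem_iff.mp hpre2
  have hr2 : ∀ s t : ℝ, |s| ≤ r2 → |t| ≤ r2 → γ s * γ t ∈ W := by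
    intro s t hs ht
    have hmem : ((s, t) : ℝ × ℝ) ∈ (fun p : ℝ × ℝ => γ p.1 * γ p.2) ⁻¹' W := by
      apply hr2b
      rw [Metric.mem_closedBall, Prod.dist_eq]
      simp only [Real.dist_eq, sub_zero]
      exact max_le hs ht
    exact hmem
  -- constants and δ
  set C₁ : ℝ := C * (KA:ℝ) ^ α with hC₁def
  have hC₁0 : 0 ≤ C₁ := mul_nonneg hC0 (Real.rpow_nonneg KA.coe_nonneg α)
  set d : ℝ := (rB / (C₁ + 1)) ^ (α⁻¹) with hddef
  have hd0 : 0 < d := Real.rpow_pos_of_pos (div_pos hrB0 (by linarith)) _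
  set δ : ℝ := min (min rA (min rη (min rθ (min r1 r2)))) d with hδdef
  have hδ0 : 0 < δ := lt_min (lt_min hrA0 (lt_min hrη0 (lt_min hrθ0 (lt_min hr10 hr20)))) hd0
  have hδrA : δ ≤ rA := (min_le_left _ _).trans (min_le_left _ _)
  have hδrη : δ ≤ rη :=
    (min_le_left _ _).trans ((min_le_right _ _).trans (min_le_left _ _))
  have hδrθ : δ ≤ rθ :=
    (min_le_left _ _).trans ((min_le_right _ _).trans ((min_le_right _ _).trans (min_le_left _ _)))
  have hδr1 : δ ≤ r1 := (min_le_left _ _).trans ((min_le_right _ _).trans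
    ((min_le_right _ _).trans ((min_le_right _ _).trans (min_le_left _ _))))
  have hδr2 : δ ≤ r2 := (min_le_left _ _).trans ((min_le_right _ _).trans
    ((min_le_right _ _).trans ((min_le_right _ _).trans (min_le_right _ _))))
  have hδd : δ ≤ d := min_le_right _ _
  have hδrB : C₁ * δ ^ α ≤ rB := by
    have h1 : δ ^ α ≤ d ^ α := Real.rpow_le_rpow hδ0.le hδd hα0.le
    have h2 : d ^ α = rB / (C₁ + 1) :=
      Real.rpow_inv_rpow (le_of_lt (div_pos hrB0 (by linarith))) hα0.ne'
    have h3 : C₁ * δ ^ α ≤ C₁ * (rB / (C₁ + 1)) := by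
      rw [← h2]; exact mul_le_mul_of_nonneg_left h1 hC₁0
    refine h3.trans ?_
    rw [← mul_div_assoc, div_le_iff₀ (by linarith : (0:ℝ) < C₁ + 1)]
    nlinarith [hrB0.le, hC₁0]
  -- the chart-gap function g
  set g : ℝ → F := fun s => ψ (f (γ s)) - ψ (1:H) with hgdef
  have hg0 : g 0 = 0 := by
    simp only [hgdef, hγ0, map_one, sub_self]
  have hψW : ∀ x ∈ W, f x ∈ ψ.source := fun x hx => hWψ ⟨x, hx, rfl⟩
  have hgsrc : ∀ s : ℝ, |s| ≤ δ → f (γ s) ∈ ψ.source := fun s hs =>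
    hψW _ (hr1 s (hs.trans hδr1))
  have hgbound : ∀ s : ℝ, |s| ≤ δ → ‖g s‖ ≤ C₁ * |s| ^ α := by
    intro s hs
    have h := hHolder (γ s) (hr1 s (hs.trans hδr1)) (γ 0) (by rw [hγ0]; exact hW1)
    rw [hγ0, map_one] at h
    have hlip := hlipc s 0 (hs.trans hδrA) (by simpa using hrA0.le)
    rw [hγ0, sub_zero] at hlip
    simp only [hgdef]
    calc ‖ψ (f (γ s)) - ψ (1:H)‖
        ≤ C * ‖φ (γ s) - φ (1:G)‖ ^ α := h
      _ ≤ C * ((KA:ℝ) * |s|) ^ α := by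
          refine mul_le_mul_of_nonneg_left ?_ hC0
          exact Real.rpow_le_rpow (norm_nonneg _) hlip hα0.le
      _ = C₁ * |s| ^ α := by
          rw [Real.mul_rpow KA.coe_nonneg (abs_nonneg s), hC₁def]; ring
  have hgball : ∀ s : ℝ, |s| ≤ δ → ‖g s‖ ≤ rB := by
    intro s hs
    refine (hgbound s hs).trans (le_trans ?_ hδrB)
    exact mul_le_mul_of_nonneg_left (Real.rpow_le_rpow (abs_nonneg s) hs hα0.le) hC₁0
  set K₂ : ℝ := C * (Kθ + Kη) ^ α + KB * C₁ * C₁ with hK₂def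
  have hK₂0 : 0 ≤ K₂ := by
    rw [hK₂def]
    have h1 : (0:ℝ) ≤ (Kθ + Kη) ^ α := Real.rpow_nonneg (by linarith) α
    exact add_nonneg (mul_nonneg hC0 h1) (mul_nonneg (mul_nonneg hKB0 hC₁0) hC₁0)
  -- the doubling estimate
  have hiii : ∀ s : ℝ, |s| ≤ δ → ‖g s - (2:ℝ) • g (s / 2)‖ ≤ K₂ * (|s| ^ α * |s| ^ α) := by
    intro s hs
    have hs2 : |s / 2| ≤ |s| := by
      rw [abs_div]
      simpa using div_le_self (abs_nonneg s) (by norm_num)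
    have hs2δ : |s / 2| ≤ δ := hs2.trans hs
    have hWs : γ s ∈ W := hr1 s (hs.trans hδr1)
    have hW2 : γ (s/2) * γ (s/2) ∈ W := hr2 _ _ (hs2δ.trans hδr2) (hs2δ.trans hδr2)
    have hx : f (γ (s/2)) ∈ ψ.source := hgsrc _ hs2δ
    have hd2 : ‖φ (γ s) - φ (γ (s/2) * γ (s/2))‖ ≤ (Kθ + Kη) * (|s| * |s|) := by
      have hT := hrectT (s/2) (s/2) (hs2δ.trans hδrθ) (hs2δ.trans hδrθ)
      have hC' := hrectC (s/2) (s/2) (hs2δ.trans hδrη) (hs2δ.trans hδrη)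
      rw [show s/2 + s/2 = s by ring] at hC'
      calc ‖φ (γ s) - φ (γ (s/2) * γ (s/2))‖
          = ‖(φ (γ s) - φ (γ (s/2)) - φ (γ (s/2)) + φ (1:G))
              - (φ (γ (s/2) * γ (s/2)) - φ (γ (s/2)) - φ (γ (s/2)) + φ (1:G))‖ := by
            congr 1; abel
        _ ≤ ‖φ (γ s) - φ (γ (s/2)) - φ (γ (s/2)) + φ (1:G)‖
            + ‖φ (γ (s/2) * γ (s/2)) - φ (γ (s/2)) - φ (γ (s/2)) + φ (1:G)‖ := norm_sub_le _ _
        _ ≤ Kη * |s/2| * |s/2| + Kθ * |s/2| * |s/2| := add_le_add hC' hT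
        _ ≤ (Kθ + Kη) * (|s| * |s|) := by
            have hq : |s/2| * |s/2| ≤ |s| * |s| :=
              mul_le_mul hs2 hs2 (abs_nonneg _) (abs_nonneg _)
            nlinarith [hq, hKη0, hKθ0]
    have ht1 : ‖ψ (f (γ s)) - ψ (f (γ (s/2)) * f (γ (s/2)))‖
        ≤ C * ((Kθ + Kη) * (|s| * |s|)) ^ α := by
      have h := hHolder (γ s) hWs (γ (s/2) * γ (s/2)) hW2
      rw [map_mul] at h
      refine h.trans (mul_le_mul_of_nonneg_left ?_ hC0)
      exact Real.rpow_le_rpow (norm_nonneg _) hd2 hα0.le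
    have ht2 : ‖ψ (f (γ (s/2)) * f (γ (s/2))) - ψ (f (γ (s/2))) - ψ (f (γ (s/2))) + ψ (1:H)‖
        ≤ KB * ‖g (s/2)‖ * ‖g (s/2)‖ := by
      have hb : ‖ψ (f (γ (s/2))) - ψ (1:H)‖ ≤ rB := by
        simpa only [hgdef] using hgball _ hs2δ
      exact hmulH _ hx _ hx hb hb
    have hgb2 : ‖g (s/2)‖ ≤ C₁ * |s| ^ α := by
      refine (hgbound _ hs2δ).trans (mul_le_mul_of_nonneg_left ?_ hC₁0)
      exact Real.rpow_le_rpow (abs_nonneg _) hs2 hα0.le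
    have hgb2' : ‖ψ (f (γ (s/2))) - ψ (1:H)‖ ≤ C₁ * |s| ^ α := by
      simpa only [hgdef] using hgb2
    have hXnn : (0:ℝ) ≤ C₁ * |s| ^ α :=
      mul_nonneg hC₁0 (Real.rpow_nonneg (abs_nonneg s) α)
    have hsplit : g s - (2:ℝ) • g (s / 2)
        = (ψ (f (γ s)) - ψ (f (γ (s/2)) * f (γ (s/2))))
          + (ψ (f (γ (s/2)) * f (γ (s/2))) - ψ (f (γ (s/2))) - ψ (f (γ (s/2))) + ψ (1:H)) := by
      simp only [hgdef, two_smul]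
      abel
    calc ‖g s - (2:ℝ) • g (s / 2)‖
        = ‖(ψ (f (γ s)) - ψ (f (γ (s/2)) * f (γ (s/2))))
            + (ψ (f (γ (s/2)) * f (γ (s/2))) - ψ (f (γ (s/2))) - ψ (f (γ (s/2))) + ψ (1:H))‖ := by
          rw [hsplit]
      _ ≤ ‖ψ (f (γ s)) - ψ (f (γ (s/2)) * f (γ (s/2)))‖
          + ‖ψ (f (γ (s/2)) * f (γ (s/2))) - ψ (f (γ (s/2))) - ψ (f (γ (s/2))) + ψ (1:H)‖ :=
          norm_add_le _ _
      _ ≤ C * ((Kθ + Kη) * (|s| * |s|)) ^ α + KB * (C₁ * |s| ^ α) * (C₁ * |s| ^ α) := by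
          refine add_le_add ht1 (ht2.trans ?_)
          exact mul_le_mul (mul_le_mul_of_nonneg_left hgb2' hKB0) hgb2' (norm_nonneg _)
            (mul_nonneg hKB0 hXnn)
      _ = K₂ * (|s| ^ α * |s| ^ α) := by
          rw [Real.mul_rpow (by linarith) (mul_nonneg (abs_nonneg s) (abs_nonneg s)),
            Real.mul_rpow (abs_nonneg s) (abs_nonneg s), hK₂def]
          ring
  -- the near-additivity estimate
  have hiv : ∀ s t : ℝ, |s| ≤ δ → |t| ≤ δ → |s + t| ≤ δ →
      ‖g (s + t) - g s - g t‖ ≤ K₂ * (|s| ^ α * |t| ^ α) := by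
    intro s t hs ht hst
    have hWst : γ (s + t) ∈ W := hr1 _ (hst.trans hδr1)
    have hW2 : γ s * γ t ∈ W := hr2 _ _ (hs.trans hδr2) (ht.trans hδr2)
    have hxs : f (γ s) ∈ ψ.source := hgsrc _ hs
    have hxt : f (γ t) ∈ ψ.source := hgsrc _ ht
    have hd2 : ‖φ (γ (s + t)) - φ (γ s * γ t)‖ ≤ (Kθ + Kη) * (|s| * |t|) := by
      have hT := hrectT s t (hs.trans hδrθ) (ht.trans hδrθ)
      have hC' := hrectC s t (hs.trans hδrη) (ht.trans hδrη)
      calc ‖φ (γ (s + t)) - φ (γ s * γ t)‖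
          = ‖(φ (γ (s + t)) - φ (γ s) - φ (γ t) + φ (1:G))
              - (φ (γ s * γ t) - φ (γ s) - φ (γ t) + φ (1:G))‖ := by congr 1; abel
        _ ≤ ‖φ (γ (s + t)) - φ (γ s) - φ (γ t) + φ (1:G)‖
            + ‖φ (γ s * γ t) - φ (γ s) - φ (γ t) + φ (1:G)‖ := norm_sub_le _ _
        _ ≤ Kη * |s| * |t| + Kθ * |s| * |t| := add_le_add hC' hT
        _ = (Kθ + Kη) * (|s| * |t|) := by ring
    have ht1 : ‖ψ (f (γ (s + t))) - ψ (f (γ s) * f (γ t))‖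
        ≤ C * ((Kθ + Kη) * (|s| * |t|)) ^ α := by
      have h := hHolder (γ (s + t)) hWst (γ s * γ t) hW2
      rw [map_mul] at h
      refine h.trans (mul_le_mul_of_nonneg_left ?_ hC0)
      exact Real.rpow_le_rpow (norm_nonneg _) hd2 hα0.le
    have ht2 : ‖ψ (f (γ s) * f (γ t)) - ψ (f (γ s)) - ψ (f (γ t)) + ψ (1:H)‖
        ≤ KB * ‖ψ (f (γ s)) - ψ (1:H)‖ * ‖ψ (f (γ t)) - ψ (1:H)‖ :=
      hmulH _ hxs _ hxt (by simpa only [hgdef] using hgball _ hs)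
        (by simpa only [hgdef] using hgball _ ht)
    have hgbs : ‖ψ (f (γ s)) - ψ (1:H)‖ ≤ C₁ * |s| ^ α := by
      simpa only [hgdef] using hgbound s hs
    have hgbt : ‖ψ (f (γ t)) - ψ (1:H)‖ ≤ C₁ * |t| ^ α := by
      simpa only [hgdef] using hgbound t ht
    have hXnn : (0:ℝ) ≤ C₁ * |t| ^ α :=
      mul_nonneg hC₁0 (Real.rpow_nonneg (abs_nonneg t) α)
    have hsplit : g (s + t) - g s - g t
        = (ψ (f (γ (s + t))) - ψ (f (γ s) * f (γ t)))
          + (ψ (f (γ s) * f (γ t)) - ψ (f (γ s)) - ψ (f (γ t)) + ψ (1:H)) := by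
      simp only [hgdef]
      abel
    calc ‖g (s + t) - g s - g t‖
        = ‖(ψ (f (γ (s + t))) - ψ (f (γ s) * f (γ t)))
            + (ψ (f (γ s) * f (γ t)) - ψ (f (γ s)) - ψ (f (γ t)) + ψ (1:H))‖ := by
          rw [hsplit]
      _ ≤ ‖ψ (f (γ (s + t))) - ψ (f (γ s) * f (γ t))‖
          + ‖ψ (f (γ s) * f (γ t)) - ψ (f (γ s)) - ψ (f (γ t)) + ψ (1:H)‖ := norm_add_le _ _
      _ ≤ C * ((Kθ + Kη) * (|s| * |t|)) ^ α + KB * (C₁ * |s| ^ α) * (C₁ * |t| ^ α) := by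
          refine add_le_add ht1 (ht2.trans ?_)
          exact mul_le_mul (mul_le_mul_of_nonneg_left hgbs hKB0) hgbt (norm_nonneg _)
            (mul_nonneg hKB0 (mul_nonneg hC₁0 (Real.rpow_nonneg (abs_nonneg s) α)))
      _ = K₂ * (|s| ^ α * |t| ^ α) := by
          rw [Real.mul_rpow (by linarith) (mul_nonneg (abs_nonneg s) (abs_nonneg t)),
            Real.mul_rpow (abs_nonneg s) (abs_nonneg t), hK₂def]
          ring
  -- the geometric ratio
  set ρ : ℝ := 2 * ((2:ℝ)⁻¹ ^ α * (2:ℝ)⁻¹ ^ α) with hρdef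
  have hρ0 : 0 ≤ ρ := by positivity
  have hρ1 : ρ < 1 := by
    have h1 : (2:ℝ)⁻¹ ^ α * (2:ℝ)⁻¹ ^ α = (2:ℝ)⁻¹ ^ (α + α) :=
      (Real.rpow_add (by norm_num) _ _).symm
    have h2 : (2:ℝ)⁻¹ ^ (α + α) < (2:ℝ)⁻¹ ^ (1:ℝ) :=
      Real.rpow_lt_rpow_of_exponent_gt (by norm_num) (by norm_num) (by linarith)
    rw [Real.rpow_one] at h2
    rw [hρdef, h1]
    linarith
  have hpowρ : ∀ n : ℕ, (2:ℝ) ^ n * (((2:ℝ)⁻¹ ^ n) ^ α * ((2:ℝ)⁻¹ ^ n) ^ α) = ρ ^ n := by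
    intro n
    have h1 : ((2:ℝ)⁻¹ ^ n : ℝ) ^ α = ((2:ℝ)⁻¹ ^ α) ^ n := by
      rw [← Real.rpow_natCast ((2:ℝ)⁻¹) n, ← Real.rpow_mul (by norm_num), mul_comm,
        Real.rpow_mul (by norm_num), Real.rpow_natCast]
    rw [h1, hρdef, ← mul_pow, ← mul_pow]
  have habs : ∀ (n : ℕ) (t : ℝ), |(2:ℝ)⁻¹ ^ n * t| = (2:ℝ)⁻¹ ^ n * |t| := by
    intro n t
    rw [abs_mul, abs_pow, abs_of_pos (by norm_num : (0:ℝ) < 2⁻¹)]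
  have hscale : ∀ (n : ℕ) (t : ℝ), |t| ≤ δ → |(2:ℝ)⁻¹ ^ n * t| ≤ δ := by
    intro n t ht
    rw [habs]
    calc (2:ℝ)⁻¹ ^ n * |t| ≤ 1 * |t| := by
          refine mul_le_mul_of_nonneg_right ?_ (abs_nonneg t)
          exact pow_le_one₀ (by norm_num) (by norm_num)
      _ = |t| := one_mul _
      _ ≤ δ := ht
  have hrpow_scale : ∀ (n : ℕ) (t : ℝ), |(2:ℝ)⁻¹ ^ n * t| ^ α
      = ((2:ℝ)⁻¹ ^ n) ^ α * |t| ^ α := by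
    intro n t
    rw [habs, Real.mul_rpow (by positivity) (abs_nonneg t)]
  -- the sequence and its limit
  set seq : ℝ → ℕ → F := fun t n => (2:ℝ) ^ n • g ((2:ℝ)⁻¹ ^ n * t) with hseqdef
  have hseqdiff : ∀ t : ℝ, |t| ≤ δ → ∀ n : ℕ,
      dist (seq t n) (seq t (n + 1)) ≤ (K₂ * (|t| ^ α * |t| ^ α)) * ρ ^ n := by
    intro t ht n
    have hsδ : |(2:ℝ)⁻¹ ^ n * t| ≤ δ := hscale n t ht
    have h2 : (2:ℝ)⁻¹ ^ (n + 1) * t = ((2:ℝ)⁻¹ ^ n * t) / 2 := by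
      rw [pow_succ]; ring
    have hseq1 : seq t (n + 1) = (2:ℝ) ^ n • ((2:ℝ) • g (((2:ℝ)⁻¹ ^ n * t) / 2)) := by
      simp only [hseqdef]
      rw [h2, pow_succ, mul_smul]
    have hseq2 : seq t n = (2:ℝ) ^ n • g ((2:ℝ)⁻¹ ^ n * t) := by simp only [hseqdef]
    rw [dist_eq_norm, hseq1, hseq2, ← smul_sub, norm_smul]
    have hnn : ‖(2:ℝ) ^ n‖ = (2:ℝ) ^ n := by
      rw [Real.norm_eq_abs, abs_pow]; norm_num
    rw [hnn]
    calc (2:ℝ) ^ n * ‖g ((2:ℝ)⁻¹ ^ n * t) - (2:ℝ) • g (((2:ℝ)⁻¹ ^ n * t) / 2)‖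
        ≤ (2:ℝ) ^ n * (K₂ * (|(2:ℝ)⁻¹ ^ n * t| ^ α * |(2:ℝ)⁻¹ ^ n * t| ^ α)) := by
          exact mul_le_mul_of_nonneg_left (hiii _ hsδ) (by positivity)
      _ = (K₂ * (|t| ^ α * |t| ^ α)) * ρ ^ n := by
          rw [hrpow_scale, ← hpowρ n]; ring
  have hcauchy : ∀ t : ℝ, |t| ≤ δ → CauchySeq (seq t) := fun t ht =>
    cauchySeq_of_le_geometric ρ _ hρ1 (hseqdiff t ht)
  have hLex : ∀ t : ℝ, ∃ a : F, |t| ≤ δ → Tendsto (seq t) atTop (𝓝 a) := by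
    intro t
    by_cases h : |t| ≤ δ
    · obtain ⟨a, ha⟩ := cauchySeq_tendsto_of_complete (hcauchy t h)
      exact ⟨a, fun _ => ha⟩
    · exact ⟨0, fun h' => absurd h' h⟩
  choose L hL using hLex
  have hseq0 : ∀ t : ℝ, seq t 0 = g t := by
    intro t
    simp only [hseqdef, pow_zero, one_smul, one_mul]
  have hL0 : L 0 = 0 := by
    have h1 : (seq 0) = fun _ : ℕ => (0:F) := by
      funext n
      simp only [hseqdef, mul_zero, hg0, smul_zero]
    have h2 := hL 0 (by simpa using hδ0.le)
    rw [h1] at h2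
    exact tendsto_nhds_unique h2 tendsto_const_nhds
  set K₆ : ℝ := K₂ / (1 - ρ) with hK₆def
  have hgL : ∀ t : ℝ, |t| ≤ δ → ‖g t - L t‖ ≤ K₆ * (|t| ^ α * |t| ^ α) := by
    intro t ht
    have h := dist_le_of_le_geometric_of_tendsto₀ ρ (K₂ * (|t| ^ α * |t| ^ α)) hρ1
      (hseqdiff t ht) (hL t ht)
    rw [hseq0, dist_eq_norm] at h
    calc ‖g t - L t‖ ≤ K₂ * (|t| ^ α * |t| ^ α) / (1 - ρ) := h
      _ = K₆ * (|t| ^ α * |t| ^ α) := by rw [hK₆def]; ring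
  have hLnorm : ∀ t : ℝ, |t| ≤ δ → ‖L t‖ ≤ C₁ * |t| ^ α + K₆ * (|t| ^ α * |t| ^ α) := by
    intro t ht
    calc ‖L t‖ = ‖g t - (g t - L t)‖ := by congr 1; abel
      _ ≤ ‖g t‖ + ‖g t - L t‖ := norm_sub_le _ _
      _ ≤ C₁ * |t| ^ α + K₆ * (|t| ^ α * |t| ^ α) := add_le_add (hgbound t ht) (hgL t ht)
  -- halving identity
  have hLhalf : ∀ t : ℝ, |t| ≤ δ → L ((2:ℝ)⁻¹ * t) = (2:ℝ)⁻¹ • L t := by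
    intro t ht
    have ht' : |(2:ℝ)⁻¹ * t| ≤ δ := by simpa [pow_one] using hscale 1 t ht
    have hshift : Tendsto (fun n => seq t (n + 1)) atTop (𝓝 (L t)) :=
      (hL t ht).comp (tendsto_add_atTop_nat 1)
    have heq : seq ((2:ℝ)⁻¹ * t) = fun n => (2:ℝ)⁻¹ • seq t (n + 1) := by
      funext n
      simp only [hseqdef, smul_smul]
      congr 1
      · rw [pow_succ]; ring
      · congr 1
        rw [pow_succ]; ring
    have h1 : Tendsto (seq ((2:ℝ)⁻¹ * t)) atTop (𝓝 ((2:ℝ)⁻¹ • L t)) := by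
      rw [heq]
      exact hshift.const_smul _
    exact tendsto_nhds_unique (hL _ ht') h1
  -- additivity
  have hLadd : ∀ s t : ℝ, |s| ≤ δ → |t| ≤ δ → |s + t| ≤ δ → L (s + t) = L s + L t := by
    intro s t hs ht hst
    have h1 : Tendsto (fun n => seq (s + t) n - seq s n - seq t n) atTop
        (𝓝 (L (s + t) - L s - L t)) := ((hL _ hst).sub (hL _ hs)).sub (hL _ ht)
    have h2 : Tendsto (fun n => seq (s + t) n - seq s n - seq t n) atTop (𝓝 0) := by
      apply squeeze_zero_norm (a := fun n => (K₂ * (|s| ^ α * |t| ^ α)) * ρ ^ n)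
      · intro n
        have heq : seq (s + t) n - seq s n - seq t n
            = (2:ℝ) ^ n • (g ((2:ℝ)⁻¹ ^ n * s + (2:ℝ)⁻¹ ^ n * t)
              - g ((2:ℝ)⁻¹ ^ n * s) - g ((2:ℝ)⁻¹ ^ n * t)) := by
          simp only [hseqdef, mul_add, smul_sub]
        rw [heq, norm_smul]
        have hnn : ‖(2:ℝ) ^ n‖ = (2:ℝ) ^ n := by
          rw [Real.norm_eq_abs, abs_pow]; norm_num
        rw [hnn]
        have hadd' : (2:ℝ)⁻¹ ^ n * s + (2:ℝ)⁻¹ ^ n * t = (2:ℝ)⁻¹ ^ n * (s + t) := by ring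
        have hb := hiv ((2:ℝ)⁻¹ ^ n * s) ((2:ℝ)⁻¹ ^ n * t) (hscale n s hs) (hscale n t ht)
          (by rw [hadd']; exact hscale n (s + t) hst)
        calc (2:ℝ) ^ n * ‖g ((2:ℝ)⁻¹ ^ n * s + (2:ℝ)⁻¹ ^ n * t)
              - g ((2:ℝ)⁻¹ ^ n * s) - g ((2:ℝ)⁻¹ ^ n * t)‖
            ≤ (2:ℝ) ^ n * (K₂ * (|(2:ℝ)⁻¹ ^ n * s| ^ α * |(2:ℝ)⁻¹ ^ n * t| ^ α)) :=
              mul_le_mul_of_nonneg_left hb (by positivity)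
          _ = (K₂ * (|s| ^ α * |t| ^ α)) * ρ ^ n := by
              rw [hrpow_scale, hrpow_scale, ← hpowρ n]; ring
      · have := (tendsto_pow_atTop_nhds_zero_of_lt_one hρ0 hρ1).const_mul
          (K₂ * (|s| ^ α * |t| ^ α))
        simpa using this
    have h4 : L (s + t) - L s - L t = 0 := tendsto_nhds_unique h1 h2
    rw [sub_sub, sub_eq_zero] at h4
    exact h4
  -- iterated halving
  have hLiter : ∀ t : ℝ, |t| ≤ δ → ∀ k : ℕ, L ((2:ℝ)⁻¹ ^ k * t) = ((2:ℝ)⁻¹) ^ k • L t := by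
    intro t ht k
    induction k with
    | zero => simp
    | succ k ih =>
      have hk : |(2:ℝ)⁻¹ ^ k * t| ≤ δ := hscale k t ht
      have h1 : (2:ℝ)⁻¹ ^ (k + 1) * t = (2:ℝ)⁻¹ * ((2:ℝ)⁻¹ ^ k * t) := by
        rw [pow_succ]; ring
      rw [h1, hLhalf _ hk, ih, smul_smul, pow_succ]
      congr 1
      ring
  -- the global extension
  have hex : ∀ t : ℝ, ∃ n : ℕ, |(2:ℝ)⁻¹ ^ n * t| ≤ δ := by
    intro t
    obtain ⟨n, hn⟩ := exists_pow_lt_of_lt_one (show (0:ℝ) < δ / (|t| + 1) by positivity)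
      (show (2:ℝ)⁻¹ < 1 by norm_num)
    refine ⟨n, ?_⟩
    rw [habs]
    have h1 : (2:ℝ)⁻¹ ^ n * |t| ≤ (2:ℝ)⁻¹ ^ n * (|t| + 1) :=
      mul_le_mul_of_nonneg_left (by linarith) (by positivity)
    have h2 : (2:ℝ)⁻¹ ^ n * (|t| + 1) < (δ / (|t| + 1)) * (|t| + 1) :=
      mul_lt_mul_of_pos_right hn (by positivity)
    rw [div_mul_cancel₀ _ (by positivity : |t| + 1 ≠ 0)] at h2
    linarith
  choose N hN using hex
  set Lbar : ℝ → F := fun t => (2:ℝ) ^ (N t) • L ((2:ℝ)⁻¹ ^ (N t) * t) with hLbardef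
  have hstep : ∀ (t : ℝ) (m k : ℕ), |(2:ℝ)⁻¹ ^ m * t| ≤ δ →
      (2:ℝ) ^ (m + k) • L ((2:ℝ)⁻¹ ^ (m + k) * t) = (2:ℝ) ^ m • L ((2:ℝ)⁻¹ ^ m * t) := by
    intro t m k hm
    have h1 : (2:ℝ)⁻¹ ^ (m + k) * t = (2:ℝ)⁻¹ ^ k * ((2:ℝ)⁻¹ ^ m * t) := by
      rw [pow_add]; ring
    rw [h1, hLiter _ hm k, smul_smul]
    congr 1
    rw [pow_add]
    have : ((2:ℝ) * (2:ℝ)⁻¹) ^ k = 1 := by norm_num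
    calc (2:ℝ) ^ m * (2:ℝ) ^ k * (2:ℝ)⁻¹ ^ k = (2:ℝ) ^ m * ((2:ℝ) * (2:ℝ)⁻¹) ^ k := by
          rw [mul_pow]; ring
      _ = (2:ℝ) ^ m := by rw [this, mul_one]
  have hind : ∀ (t : ℝ) (n : ℕ), |(2:ℝ)⁻¹ ^ n * t| ≤ δ →
      Lbar t = (2:ℝ) ^ n • L ((2:ℝ)⁻¹ ^ n * t) := by
    intro t n hn
    rcases le_total n (N t) with h | h
    · simp only [hLbardef]
      rw [show N t = n + (N t - n) by omega]
      exact hstep t n (N t - n) hn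
    · simp only [hLbardef]
      rw [show n = N t + (n - N t) by omega] at hn ⊢
      exact (hstep t (N t) (n - N t) (hN t)).symm
  have hLbar_eq : ∀ t : ℝ, |t| ≤ δ → Lbar t = L t := by
    intro t ht
    have := hind t 0 (by simpa using ht)
    simpa using this
  have hmono : ∀ (t : ℝ) (m n : ℕ), m ≤ n → |(2:ℝ)⁻¹ ^ m * t| ≤ δ → |(2:ℝ)⁻¹ ^ n * t| ≤ δ := by
    intro t m n hmn hm
    rw [habs] at hm ⊢
    calc (2:ℝ)⁻¹ ^ n * |t| ≤ (2:ℝ)⁻¹ ^ m * |t| := by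
          refine mul_le_mul_of_nonneg_right ?_ (abs_nonneg t)
          exact pow_le_pow_of_le_one (by norm_num) (by norm_num) hmn
      _ ≤ δ := hm
  have hadd : ∀ s t : ℝ, Lbar (s + t) = Lbar s + Lbar t := by
    intro s t
    set n : ℕ := max (N s) (max (N t) (N (s + t))) with hndef
    have hns : |(2:ℝ)⁻¹ ^ n * s| ≤ δ := hmono s (N s) n (le_max_left _ _) (hN s)
    have hnt : |(2:ℝ)⁻¹ ^ n * t| ≤ δ :=
      hmono t (N t) n ((le_max_left _ _).trans (le_max_right _ _)) (hN t)
    have hnst : |(2:ℝ)⁻¹ ^ n * (s + t)| ≤ δ :=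
      hmono (s + t) (N (s + t)) n ((le_max_right _ _).trans (le_max_right _ _)) (hN (s + t))
    rw [hind (s + t) n hnst, hind s n hns, hind t n hnt]
    have h1 : (2:ℝ)⁻¹ ^ n * (s + t) = (2:ℝ)⁻¹ ^ n * s + (2:ℝ)⁻¹ ^ n * t := by ring
    rw [h1, hLadd _ _ hns hnt (by rw [← h1]; exact hnst), smul_add]
  have hLbar0 : Lbar 0 = 0 := by
    rw [hLbar_eq 0 (by simpa using hδ0.le), hL0]
  -- continuity of Lbar at 0
  have habs_rpow : Tendsto (fun t : ℝ => |t| ^ α) (𝓝 0) (𝓝 0) := by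
    have h1 : ContinuousAt (fun x : ℝ => x ^ α) 0 :=
      Real.continuousAt_rpow_const 0 α (Or.inr hα0.le)
    have h2 : Tendsto (fun x : ℝ => x ^ α) (𝓝 0) (𝓝 0) := by
      have := h1.tendsto
      rwa [Real.zero_rpow hα0.ne'] at this
    exact h2.comp (continuous_abs.tendsto' 0 0 abs_zero)
  have hcont0 : Tendsto Lbar (𝓝 0) (𝓝 (0:F)) := by
    apply squeeze_zero_norm' (a := fun t : ℝ => C₁ * |t| ^ α + K₆ * (|t| ^ α * |t| ^ α))
    · filter_upwards [Metric.closedBall_mem_nhds (0:ℝ) hδ0] with t ht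
      have htδ : |t| ≤ δ := by simpa [Real.dist_eq] using ht
      rw [hLbar_eq t htδ]
      exact hLnorm t htδ
    · have := (habs_rpow.const_mul C₁).add ((habs_rpow.mul habs_rpow).const_mul K₆)
      simpa using this
  -- Lbar is linear
  set Φ : ℝ →+ F := AddMonoidHom.mk' Lbar hadd with hΦdef
  have hΦcont : Continuous Φ := by
    apply continuous_of_continuousAt_zero Φ
    show ContinuousAt Lbar 0
    rw [ContinuousAt, hLbar0]
    exact hcont0
  set lin : ℝ →L[ℝ] F := Φ.toRealLinearMap hΦcont with hlindef
  have hlinear : ∀ t : ℝ, Lbar t = t • Lbar 1 := by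
    intro t
    have h := lin.map_smul t (1:ℝ)
    rw [smul_eq_mul, mul_one] at h
    have hcoe : ∀ x : ℝ, lin x = Lbar x := by
      intro x
      simp only [hlindef, hΦdef, AddMonoidHom.coe_toRealLinearMap,
        ContinuousLinearMap.coe_coe]
      rfl
    rw [hcoe, hcoe] at h
    exact h
  -- conclusion
  refine ⟨δ, hδ0, hgsrc, Lbar 1, ?_⟩
  intro t _ htδ
  have hvt : t • Lbar 1 = L t := by
    rw [← hlinear t, hLbar_eq t htδ]
  have hfun : (fun n : ℕ => (2:ℝ) ^ n • (ψ (f (γ ((2:ℝ)⁻¹ ^ n * t))) - ψ (1:H))) = seq t := by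
    funext n
    simp only [hseqdef, hgdef]
  rw [hfun, hvt]
  exact hL t htδ
end

section
/- Let E and F be real Banach spaces, G and H Lie groups modelled on E and F, α ∈ (1/2, 1], and f : G → H a group homomorphism which is α-Hölder on a chart neighbourhood of the identity (with charts φ of G at 1 and ψ of H at 1). Let γ : ℝ → G be a smooth curve with γ(0) = 1 such that the curve t ↦ φ(γ(t)) has derivative 0 at t = 0. Then (ψ(f(γ(t))) − ψ(1_H))/t converges to 0 in F as t → 0. -/
open scoped Manifold Topology

/-- For an `α`-Hölder homomorphism (`α ∈ (1/2, 1]`) between Banach Lie groups and a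
smooth curve `γ` through the identity whose chart representative has vanishing
derivative at `0`, the difference quotient `(ψ(f(γ t)) − ψ(1))/t` tends to `0`. -/
theorem difference_quotient_tendsto_zero_of_deriv_zero
    {E : Type*} [NormedAddCommGroup E] [NormedSpace ℝ E] [CompleteSpace E]
    {F : Type*} [NormedAddCommGroup F] [NormedSpace ℝ F] [CompleteSpace F]
    {G : Type*} [TopologicalSpace G] [ChartedSpace E G] [Group G] [LieGroup 𝓘(ℝ, E) (⊤ : ℕ∞) G]
    {H : Type*} [TopologicalSpace H] [ChartedSpace F H] [Group H] [LieGroup 𝓘(ℝ, F) (⊤ : ℕ∞) H]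
    {α : ℝ} (hα : α ∈ Set.Ioc (1 / 2 : ℝ) 1)
    (f : G →* H)
    (hf : ∃ W : Set G, IsOpen W ∧ (1 : G) ∈ W ∧ W ⊆ (chartAt E (1 : G)).source ∧
      f '' W ⊆ (chartAt F (1 : H)).source ∧
      ∃ C ≥ (0 : ℝ), ∀ x ∈ W, ∀ y ∈ W,
        ‖chartAt F (1 : H) (f x) - chartAt F (1 : H) (f y)‖
          ≤ C * ‖chartAt E (1 : G) x - chartAt E (1 : G) y‖ ^ α)
    (γ : ℝ → G) (hγ : ContMDiff 𝓘(ℝ, ℝ) 𝓘(ℝ, E) (⊤ : ℕ∞) γ) (hγ0 : γ 0 = 1)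
    (hγ' : HasDerivAt (fun t : ℝ => chartAt E (1 : G) (γ t)) 0 0) :
    Filter.Tendsto
      (fun t : ℝ => t⁻¹ • (chartAt F (1 : H) (f (γ t)) - chartAt F (1 : H) (1 : H)))
      (𝓝[≠] 0) (𝓝 0) := by
  obtain ⟨W, hWopen, hW1, hWsrc, hWim, C, hC0, hC⟩ := hf
  obtain ⟨hα1, hα2⟩ := hα
  have hαpos : (0 : ℝ) < α := by linarith
  set g : ℝ → E := fun t : ℝ => chartAt E (1 : G) (γ t) with hg_def
  -- g is C² at 0
  have hg2 : ContDiffAt ℝ 2 g 0 := by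
    have h1 : ContMDiffAt 𝓘(ℝ, ℝ) 𝓘(ℝ, E) (⊤ : ℕ∞) (extChartAt 𝓘(ℝ, E) (1 : G) ∘ γ) 0 :=
      (contMDiffAt_extChartAt' (by rw [hγ0]; exact mem_chart_source E 1)).comp 0 hγ.contMDiffAt
    have h2 := h1.contDiffAt
    have h3 : (extChartAt 𝓘(ℝ, E) (1 : G) ∘ γ) = g := by
      ext t; simp [g, extChartAt]
    rw [h3] at h2
    exact h2.of_le (by norm_cast)
  -- second-order bound: ‖g t - g 0‖ ≤ K * t ^ 2 near 0
  obtain ⟨u, hu, hconts⟩ : ∃ u ∈ 𝓝 (0 : ℝ), ContDiffOn ℝ 2 g u :=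
    hg2.contDiffOn le_rfl (by simp)
  obtain ⟨r, hr0, hball⟩ := Metric.mem_nhds_iff.1 hu
  have hgder : ∀ x ∈ Metric.ball (0 : ℝ) r, DifferentiableAt ℝ g x := fun x hx =>
    ((hconts.mono hball).differentiableOn (by norm_num)).differentiableAt
      (Metric.isOpen_ball.mem_nhds hx)
  have hderC : ContDiffOn ℝ 1 (deriv g) (Metric.ball (0 : ℝ) r) :=
    (hconts.mono hball).deriv_of_isOpen Metric.isOpen_ball (by norm_cast)
  have hderdiff : DifferentiableAt ℝ (deriv g) 0 :=
    (hderC.differentiableOn one_ne_zero).differentiableAt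
      (Metric.isOpen_ball.mem_nhds (by simpa using hr0))
  have hder0 : deriv g 0 = 0 := hγ'.deriv
  have hbigO : (fun s : ℝ => deriv g s) =O[𝓝 0] fun s : ℝ => s := by
    have := hderdiff.isBigO_sub
    simpa [hder0] using this
  obtain ⟨K₀, hK⟩ := hbigO.isBigOWith
  set K : ℝ := max K₀ 0 with hK_def
  have hKnn : 0 ≤ K := le_max_right _ _
  obtain ⟨δ, hδ0, hδ⟩ := Metric.eventually_nhds_iff.1 hK.bound
  set ρ := min r δ with hρ_def
  have hρ0 : 0 < ρ := lt_min hr0 hδ0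
  have hquad : ∀ t : ℝ, |t| < ρ → ‖g t - g 0‖ ≤ K * t ^ 2 := by
    intro t ht
    have habs : ∀ x ∈ Set.uIcc (0 : ℝ) t, |x| ≤ |t| := by
      intro x hx
      rcases Set.mem_uIcc.1 hx with ⟨h1, h2⟩ | ⟨h1, h2⟩ <;>
        (rw [abs_le]; constructor <;> nlinarith [le_abs_self t, neg_abs_le t, abs_nonneg t])
    have hseg : Set.uIcc (0 : ℝ) t ⊆ Metric.ball (0 : ℝ) r := by
      intro x hx
      rw [Metric.mem_ball, Real.dist_eq, sub_zero]
      exact lt_of_le_of_lt (habs x hx) (lt_of_lt_of_le ht (min_le_left _ _))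
    have hmv : ‖g t - g 0‖ ≤ K * |t| * ‖t - 0‖ := by
      refine (convex_uIcc (0 : ℝ) t).norm_image_sub_le_of_norm_hasDerivWithin_le
        (fun x hx => (hgder x (hseg hx)).hasDerivAt.hasDerivWithinAt) ?_
        (Set.left_mem_uIcc) (Set.right_mem_uIcc)
      intro x hx
      have hxδ : dist x 0 < δ := by
        rw [Real.dist_eq, sub_zero]
        exact lt_of_le_of_lt (habs x hx) (lt_of_lt_of_le ht (min_le_right _ _))
      calc ‖deriv g x‖ ≤ K₀ * ‖x‖ := hδ hxδ
        _ ≤ K * |x| := by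
            have := abs_nonneg x
            rw [Real.norm_eq_abs]
            nlinarith [le_max_left K₀ (0 : ℝ)]
        _ ≤ K * |t| := by nlinarith [habs x hx]
    calc ‖g t - g 0‖ ≤ K * |t| * ‖t - 0‖ := hmv
      _ = K * t ^ 2 := by rw [sub_zero, Real.norm_eq_abs, mul_assoc, ← sq_abs t]; ring
  -- Hölder bound transfer
  have hWev : ∀ᶠ t in 𝓝 (0 : ℝ), γ t ∈ W := by
    have : ContinuousAt γ 0 := hγ.continuous.continuousAt
    have hWn : W ∈ 𝓝 (γ 0) := hWopen.mem_nhds (by rw [hγ0]; exact hW1)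
    exact this hWn
  have hbound : ∀ᶠ t in 𝓝[≠] (0 : ℝ),
      ‖t⁻¹ • (chartAt F (1 : H) (f (γ t)) - chartAt F (1 : H) (1 : H))‖
        ≤ |t|⁻¹ * (C * (K * t ^ 2) ^ α) := by
    filter_upwards [eventually_nhdsWithin_of_eventually_nhds hWev,
      eventually_nhdsWithin_of_eventually_nhds (Metric.eventually_nhds_iff.2
        ⟨ρ, hρ0, fun {t} ht => by rwa [Real.dist_eq, sub_zero] at ht⟩),
      self_mem_nhdsWithin] with t hW ht htne
    have h1 : chartAt F (1 : H) (1 : H) = chartAt F (1 : H) (f (1 : G)) := by rw [map_one]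
    have h2 : ‖chartAt F (1 : H) (f (γ t)) - chartAt F (1 : H) (1 : H)‖
        ≤ C * ‖g t - g 0‖ ^ α := by
      rw [h1]
      have := hC (γ t) hW 1 hW1
      have hgg : chartAt E (1 : G) (1 : G) = g 0 := by rw [hg_def]; simp [hγ0]
      rwa [hgg] at this
    have h3 : ‖g t - g 0‖ ^ α ≤ (K * t ^ 2) ^ α :=
      Real.rpow_le_rpow (norm_nonneg _) (hquad t (show |t| < ρ from ht)) hαpos.le
    rw [norm_smul, Real.norm_eq_abs, abs_inv]
    have hti : (0 : ℝ) ≤ |t|⁻¹ := by positivity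
    calc |t|⁻¹ * ‖chartAt F (1 : H) (f (γ t)) - chartAt F (1 : H) (1 : H)‖
        ≤ |t|⁻¹ * (C * ‖g t - g 0‖ ^ α) := by
          exact mul_le_mul_of_nonneg_left h2 hti
      _ ≤ |t|⁻¹ * (C * (K * t ^ 2) ^ α) := by
          exact mul_le_mul_of_nonneg_left (mul_le_mul_of_nonneg_left h3 hC0) hti
  -- the majorant tends to 0
  have hmaj : Filter.Tendsto (fun t : ℝ => |t|⁻¹ * (C * (K * t ^ 2) ^ α)) (𝓝[≠] 0) (𝓝 0) := by
    have heq : ∀ t : ℝ, t ≠ 0 →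
        |t|⁻¹ * (C * (K * t ^ 2) ^ α) = (C * K ^ α) * |t| ^ (2 * α - 1) := by
      intro t htne
      have habs : (0 : ℝ) < |t| := abs_pos.2 htne
      have e1 : (K * t ^ 2) ^ α = K ^ α * |t| ^ (2 * α) := by
        rw [Real.mul_rpow hKnn (sq_nonneg t)]
        congr 1
        rw [← sq_abs t, ← Real.rpow_natCast |t| 2, ← Real.rpow_mul (abs_nonneg t)]
        norm_num
      have e2 : |t| ^ (2 * α - 1) = |t|⁻¹ * |t| ^ (2 * α) := by
        rw [show 2 * α - 1 = -1 + 2 * α by ring, Real.rpow_add habs, Real.rpow_neg_one]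
      rw [e1, e2]; ring
    have hexp : (0 : ℝ) < 2 * α - 1 := by linarith
    have h0 : Filter.Tendsto (fun t : ℝ => |t| ^ (2 * α - 1)) (𝓝 0) (𝓝 0) := by
      have hc : ContinuousAt (fun x : ℝ => x ^ (2 * α - 1)) 0 :=
        Real.continuousAt_rpow_const 0 (2 * α - 1) (Or.inr hexp.le)
      have := hc.tendsto.comp (continuous_abs.tendsto' 0 0 abs_zero)
      simpa [Function.comp_def, Real.zero_rpow hexp.ne'] using this
    have h1 : Filter.Tendsto (fun t : ℝ => (C * K ^ α) * |t| ^ (2 * α - 1)) (𝓝[≠] 0) (𝓝 0) := by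
      have := (h0.const_mul (C * K ^ α)).mono_left (nhdsWithin_le_nhds (s := {(0 : ℝ)}ᶜ))
      simpa using this
    refine h1.congr' ?_
    filter_upwards [self_mem_nhdsWithin] with t htne
    exact (heq t htne).symm
  exact squeeze_zero_norm' hbound hmaj
end

section
/- Let E and F be real Banach spaces, G and H Lie groups modelled on E and F, α ∈ (0, 1], and f : G → H a group homomorphism which is α-Hölder on a chart neighbourhood of the identity. Then f is α-Hölder in charts near every point: for every x ∈ G there exist an open neighbourhood W_x of x contained in the source of the chart φ_x of G at x, with f(W_x) contained in the source of the chart ψ_{f(x)} of H at f(x), and a constant C_x ≥ 0 such that ‖ψ_{f(x)}(f(u)) − ψ_{f(x)}(f(v))‖ ≤ C_x·‖φ_x(u) − φ_x(v)‖^α for all u, v ∈ W_x. -/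
open scoped Manifold Topology

open Set Filter

/-- Left translation, read in the preferred charts, is `C¹` at the base point. -/
theorem aux_contDiffAt_mul_left
    {E : Type*} [NormedAddCommGroup E] [NormedSpace ℝ E]
    {G : Type*} [TopologicalSpace G] [ChartedSpace E G] [Group G] [LieGroup 𝓘(ℝ, E) (⊤ : ℕ∞) G]
    (a b : G) :
    ContDiffAt ℝ 1 (fun w => chartAt E (a * b) (a * (chartAt E b).symm w))
      (chartAt E b b) := by
  have h : ContMDiffAt 𝓘(ℝ, E) 𝓘(ℝ, E) 1 (a * ·) b := contMDiff_mul_left.contMDiffAt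
  rw [contMDiffAt_iff] at h
  have h2 := h.2
  rw [show (Set.range (𝓘(ℝ, E) : ModelWithCorners ℝ E E)) = Set.univ by simp] at h2
  have h3 := h2.contDiffAt (by simp)
  convert h3 using 2
  all_goals simp [extChartAt_coe]

/-- A homomorphism between Banach Lie groups which is `α`-Hölder on a chart
neighbourhood of the identity is `α`-Hölder in charts near every point. -/
theorem holder_at_one_implies_holder_everywhere
    {E : Type*} [NormedAddCommGroup E] [NormedSpace ℝ E] [CompleteSpace E]
    {F : Type*} [NormedAddCommGroup F] [NormedSpace ℝ F] [CompleteSpace F]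
    {G : Type*} [TopologicalSpace G] [ChartedSpace E G] [Group G] [LieGroup 𝓘(ℝ, E) (⊤ : ℕ∞) G]
    {H : Type*} [TopologicalSpace H] [ChartedSpace F H] [Group H] [LieGroup 𝓘(ℝ, F) (⊤ : ℕ∞) H]
    {α : ℝ} (hα : α ∈ Set.Ioc (0 : ℝ) 1)
    (f : G →* H)
    (hf : ∃ W : Set G, IsOpen W ∧ (1 : G) ∈ W ∧ W ⊆ (chartAt E (1 : G)).source ∧
      f '' W ⊆ (chartAt F (1 : H)).source ∧
      ∃ C ≥ (0 : ℝ), ∀ x ∈ W, ∀ y ∈ W,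
        ‖chartAt F (1 : H) (f x) - chartAt F (1 : H) (f y)‖
          ≤ C * ‖chartAt E (1 : G) x - chartAt E (1 : G) y‖ ^ α) :
    ∀ x : G, ∃ Wx : Set G, IsOpen Wx ∧ x ∈ Wx ∧ Wx ⊆ (chartAt E x).source ∧
      f '' Wx ⊆ (chartAt F (f x)).source ∧
      ∃ Cx ≥ (0 : ℝ), ∀ u ∈ Wx, ∀ v ∈ Wx,
        ‖chartAt F (f x) (f u) - chartAt F (f x) (f v)‖
          ≤ Cx * ‖chartAt E x u - chartAt E x v‖ ^ α := by
  obtain ⟨W, hWo, hW1, hWsrc, hfW, C, hC0, hHol⟩ := hf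
  haveI : IsTopologicalGroup G := topologicalGroup_of_lieGroup 𝓘(ℝ, E) (⊤ : ℕ∞)
  haveI : IsTopologicalGroup H := topologicalGroup_of_lieGroup 𝓘(ℝ, F) (⊤ : ℕ∞)
  intro x
  -- The map `A` : chart rep of left translation by x⁻¹, Lipschitz near chartAt E x x
  set A : E → E := fun w => chartAt E (1 : G) (x⁻¹ * (chartAt E x).symm w) with hA
  have hAdiff : ContDiffAt ℝ 1 A (chartAt E x x) := by
    have := aux_contDiffAt_mul_left (E := E) x⁻¹ x
    rwa [inv_mul_cancel] at this
  obtain ⟨K1, t1, ht1, hL1⟩ := hAdiff.exists_lipschitzOnWith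
  -- The map `B` : chart rep of left translation by f x, Lipschitz near chartAt F 1 1
  set B : F → F := fun w => chartAt F (f x) (f x * (chartAt F (1 : H)).symm w) with hB
  have hBdiff : ContDiffAt ℝ 1 B (chartAt F (1 : H) (1 : H)) := by
    have := aux_contDiffAt_mul_left (E := F) (f x) (1 : H)
    rwa [mul_one] at this
  obtain ⟨K2, t2, ht2, hL2⟩ := hBdiff.exists_lipschitzOnWith
  -- The set S of points u with x⁻¹ * u ∈ W
  set S : Set G := (fun u => x⁻¹ * u) ⁻¹' W with hSdef
  have hSo : IsOpen S := hWo.preimage (continuous_mul_left x⁻¹)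
  have hxS : x ∈ S := by simp [hSdef, hW1]
  -- the map c
  set c : G → F := fun u => chartAt F (1 : H) (f (x⁻¹ * u)) with hc
  -- continuity of c at x
  set g : G → E := fun u => chartAt E (1 : G) (x⁻¹ * u) with hgdef
  have hgc : ContinuousAt g x := by
    have h1 : ContinuousAt (fun u : G => x⁻¹ * u) x := (continuous_mul_left x⁻¹).continuousAt
    have h2 : ContinuousAt (chartAt E (1 : G)) (x⁻¹ * x) := by
      rw [inv_mul_cancel]
      exact (chartAt E (1 : G)).continuousAt (mem_chart_source E (1 : G))
    exact h2.comp h1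
  have hgnorm : Filter.Tendsto (fun u => ‖g u - g x‖) (𝓝 x) (𝓝 0) := by
    rw [← tendsto_iff_norm_sub_tendsto_zero]
    exact hgc
  have hbnd : Filter.Tendsto (fun u => C * ‖g u - g x‖ ^ α) (𝓝 x) (𝓝 0) := by
    have hrp : Filter.Tendsto (fun t : ℝ => t ^ α) (𝓝 0) (𝓝 ((0 : ℝ) ^ α)) :=
      (Real.continuousAt_rpow_const 0 α (Or.inr hα.1.le)).tendsto
    have h2 := hrp.comp hgnorm
    rw [Real.zero_rpow hα.1.ne'] at h2
    simpa using h2.const_mul C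
  have hcx : ContinuousAt c x := by
    rw [ContinuousAt, tendsto_iff_norm_sub_tendsto_zero]
    refine squeeze_zero' ?_ ?_ hbnd
    · exact Filter.Eventually.of_forall fun u => norm_nonneg _
    · filter_upwards [hSo.mem_nhds hxS] with u hu
      simpa [hc, hgdef] using hHol _ hu _ hxS
  -- continuity of u ↦ f (x⁻¹ * u) at x
  have hf1 : ContinuousAt (fun u => f (x⁻¹ * u)) x := by
    have hmem : c x ∈ (chartAt F (1 : H)).target := by
      apply (chartAt F (1 : H)).map_source
      simp [hc, mem_chart_source]
    have hsymm : ContinuousAt (chartAt F (1 : H)).symm (c x) :=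
      (chartAt F (1 : H)).continuousAt_symm hmem
    have := hsymm.comp hcx
    refine this.congr ?_
    filter_upwards [hSo.mem_nhds hxS] with u hu
    exact (chartAt F (1 : H)).left_inv (hfW ⟨_, hu, rfl⟩)
  have hfu : ContinuousAt (fun u => f x * f (x⁻¹ * u)) x :=
    ((continuous_mul_left (f x)).continuousAt).comp hf1
  -- key rewriting: f u = f x * f (x⁻¹ * u)
  have hkey : ∀ u : G, f u = f x * f (x⁻¹ * u) := fun u => by
    rw [← map_mul, mul_inv_cancel_left]
  -- the neighborhood
  have hN : {u : G | u ∈ (chartAt E x).source ∧ x⁻¹ * u ∈ W ∧ chartAt E x u ∈ t1 ∧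
      c u ∈ t2 ∧ f x * f (x⁻¹ * u) ∈ (chartAt F (f x)).source} ∈ 𝓝 x := by
    have m1 : {u : G | u ∈ (chartAt E x).source} ∈ 𝓝 x :=
      (chartAt E x).open_source.mem_nhds (mem_chart_source E x)
    have m2 : {u : G | x⁻¹ * u ∈ W} ∈ 𝓝 x := hSo.mem_nhds hxS
    have m3 : {u : G | chartAt E x u ∈ t1} ∈ 𝓝 x :=
      ((chartAt E x).continuousAt (mem_chart_source E x)).preimage_mem_nhds ht1
    have m4 : {u : G | c u ∈ t2} ∈ 𝓝 x := by
      refine hcx.preimage_mem_nhds ?_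
      have : c x = chartAt F (1 : H) (1 : H) := by simp [hc]
      rw [this]
      exact ht2
    have m5 : {u : G | f x * f (x⁻¹ * u) ∈ (chartAt F (f x)).source} ∈ 𝓝 x := by
      refine hfu.preimage_mem_nhds ?_
      apply (chartAt F (f x)).open_source.mem_nhds
      simp [mem_chart_source]
    filter_upwards [m1, m2, m3, m4, m5] with u h1 h2 h3 h4 h5
    exact ⟨h1, h2, h3, h4, h5⟩
  obtain ⟨Wx, hWxsub, hWxo, hxWx⟩ := mem_nhds_iff.mp hN
  refine ⟨Wx, hWxo, hxWx, fun u hu => (hWxsub hu).1, ?_, ?_⟩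
  · rintro _ ⟨u, hu, rfl⟩
    rw [hkey u]
    exact (hWxsub hu).2.2.2.2
  · refine ⟨(K2 : ℝ) * C * (K1 : ℝ) ^ α,
      mul_nonneg (mul_nonneg K2.coe_nonneg hC0) (Real.rpow_nonneg K1.coe_nonneg α), ?_⟩
    intro u hu v hv
    obtain ⟨hu1, hu2, hu3, hu4, hu5⟩ := hWxsub hu
    obtain ⟨hv1, hv2, hv3, hv4, hv5⟩ := hWxsub hv
    -- chart identities
    have hBu : chartAt F (f x) (f u) = B (c u) := by
      simp only [hB, hc]
      rw [(chartAt F (1 : H)).left_inv (hfW ⟨_, hu2, rfl⟩), ← hkey u]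
    have hBv : chartAt F (f x) (f v) = B (c v) := by
      simp only [hB, hc]
      rw [(chartAt F (1 : H)).left_inv (hfW ⟨_, hv2, rfl⟩), ← hkey v]
    have hAu : chartAt E (1 : G) (x⁻¹ * u) = A (chartAt E x u) := by
      simp only [hA]
      rw [(chartAt E x).left_inv hu1]
    have hAv : chartAt E (1 : G) (x⁻¹ * v) = A (chartAt E x v) := by
      simp only [hA]
      rw [(chartAt E x).left_inv hv1]
    have step1 : ‖B (c u) - B (c v)‖ ≤ (K2 : ℝ) * ‖c u - c v‖ := by
      have := hL2.dist_le_mul _ hu4 _ hv4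
      simpa [dist_eq_norm] using this
    have step2 : ‖c u - c v‖ ≤ C * ‖chartAt E (1 : G) (x⁻¹ * u)
        - chartAt E (1 : G) (x⁻¹ * v)‖ ^ α := hHol _ hu2 _ hv2
    have step3 : ‖A (chartAt E x u) - A (chartAt E x v)‖
        ≤ (K1 : ℝ) * ‖chartAt E x u - chartAt E x v‖ := by
      have := hL1.dist_le_mul _ hu3 _ hv3
      simpa [dist_eq_norm] using this
    calc ‖chartAt F (f x) (f u) - chartAt F (f x) (f v)‖
        = ‖B (c u) - B (c v)‖ := by rw [hBu, hBv]
      _ ≤ (K2 : ℝ) * ‖c u - c v‖ := step1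
      _ ≤ (K2 : ℝ) * (C * ‖chartAt E (1 : G) (x⁻¹ * u)
            - chartAt E (1 : G) (x⁻¹ * v)‖ ^ α) := by
          exact mul_le_mul_of_nonneg_left step2 K2.coe_nonneg
      _ = (K2 : ℝ) * (C * ‖A (chartAt E x u) - A (chartAt E x v)‖ ^ α) := by
          rw [hAu, hAv]
      _ ≤ (K2 : ℝ) * (C * ((K1 : ℝ) * ‖chartAt E x u - chartAt E x v‖) ^ α) := by
          refine mul_le_mul_of_nonneg_left (mul_le_mul_of_nonneg_left ?_ hC0) K2.coe_nonneg
          exact Real.rpow_le_rpow (norm_nonneg _) step3 hα.1.le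
      _ = (K2 : ℝ) * C * (K1 : ℝ) ^ α * ‖chartAt E x u - chartAt E x v‖ ^ α := by
          rw [Real.mul_rpow K1.coe_nonneg (norm_nonneg _)]
          ring
end
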